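/- arXiv:1303.5183 — 5 statements merged into one kernel-verified Lean document; each statement's English description precedes it below -/
import Mathlib

section
/- Let G be a second countable locally compact group having Property (T_{ℓ_p}) for some real number p with 1 < p < ∞. Then G is compactly generated, i.e., there is a compact subset of G that generates G as a group. -/
open scoped ENNReal Pointwise
open Filter MeasureTheory

noncomputable section

/-- The conjugate exponent `q` of `p`, i.e. the solution of `1/p + 1/q = 1` in `ℝ≥0∞`. -/
def conjExp (p : ℝ≥0∞) : ℝ≥0∞ := (1 - p⁻¹)⁻¹

/-- The canonical pairing between `ℓ_q` and `ℓ_p`: `⟨φ, f⟩ = ∑ₓ φ(x) f(x)`. -/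
def dualPair {X : Type*} (φ f : X → ℂ) : ℂ := ∑' x, φ x * f x

/-- An orthogonal representation of a topological group `G` on `ℓ_p = ℓ_p(ℕ, ℂ)`:
a homomorphism into the group of surjective linear isometries of `ℓ_p` which is strongly
continuous. -/
structure OrthRep (G : Type*) [Group G] [TopologicalSpace G] (p : ℝ≥0∞) [Fact (1 ≤ p)] where
  toFun : G →* (lp (fun _ : ℕ => ℂ) p ≃ₗᵢ[ℂ] lp (fun _ : ℕ => ℂ) p)
  continuous_apply : ∀ f : lp (fun _ : ℕ => ℂ) p, Continuous fun g => toFun g f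

/-- `φ ∈ ℓ_q` is an invariant vector for the dual representation `π*` on `ℓ_q`
(where `π*(g) = (π(g⁻¹))ᵀ`), i.e. `⟨φ, π(g) f⟩ = ⟨φ, f⟩` for all `g` and `f`. -/
def OrthRep.DualInvariant {G : Type*} [Group G] [TopologicalSpace G] {p : ℝ≥0∞}
    [Fact (1 ≤ p)] (π : OrthRep G p) (φ : ℕ → ℂ) : Prop :=
  Memℓp φ (conjExp p) ∧
    ∀ (g : G) (f : lp (fun _ : ℕ => ℂ) p), dualPair φ (π.toFun g f) = dualPair φ f

/-- `ℓ'_p(π)`: the annihilator in `ℓ_p` of the subspace of `π*(G)`-invariant vectors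
of `ℓ_q`. -/
def OrthRep.ann {G : Type*} [Group G] [TopologicalSpace G] {p : ℝ≥0∞}
    [Fact (1 ≤ p)] (π : OrthRep G p) : Set (lp (fun _ : ℕ => ℂ) p) :=
  {f | ∀ φ : ℕ → ℂ, π.DualInvariant φ → dualPair φ f = 0}

/-- There is a sequence of almost invariant unit vectors for `π` lying in the subset `S`:
unit vectors `f_n ∈ S` with `lim_n sup_{g ∈ Q} ‖π(g) f_n - f_n‖ = 0` for every compact
`Q ⊆ G`. -/
def OrthRep.HasAlmostInvariantSeq {G : Type*} [Group G] [TopologicalSpace G] {p : ℝ≥0∞}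
    [Fact (1 ≤ p)] (π : OrthRep G p) (S : Set (lp (fun _ : ℕ => ℂ) p)) : Prop :=
  ∃ f : ℕ → lp (fun _ : ℕ => ℂ) p, (∀ n, f n ∈ S) ∧ (∀ n, ‖f n‖ = 1) ∧
    ∀ Q : Set G, IsCompact Q → ∀ ε : ℝ, 0 < ε →
      ∃ N : ℕ, ∀ n ≥ N, ∀ g ∈ Q, ‖π.toFun g (f n) - f n‖ < ε

/-- Property `(T_{ℓ_p})` for a topological group `G`: no orthogonal representation of `G`
on `ℓ_p` admits a sequence of almost invariant unit vectors in `ℓ'_p(π)`. -/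
def HasPropertyTlp (G : Type*) [Group G] [TopologicalSpace G] (p : ℝ) : Prop :=
  ∀ [Fact (1 ≤ ENNReal.ofReal p)],
    ∀ π : OrthRep G (ENNReal.ofReal p), ¬ π.HasAlmostInvariantSeq π.ann

namespace TlpProof
variable {q : ℝ≥0∞} [Fact (1 ≤ q)]

theorem memℓp_comp_equiv (hq : 0 < q.toReal) {f : ℕ → ℂ} (hf : Memℓp f q) (t : ℕ ≃ ℕ) :
    Memℓp (fun x => f (t x)) q :=
  memℓp_gen ((t.summable_iff (f := fun i => ‖f i‖ ^ q.toReal)).2 (hf.summable hq))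

theorem norm_comp_equiv (hq : 0 < q.toReal) (f : lp (fun _ : ℕ => ℂ) q) (t : ℕ ≃ ℕ)
    (g : lp (fun _ : ℕ => ℂ) q) (hg : ∀ x, g x = f (t x)) : ‖g‖ = ‖f‖ := by
  refine Real.rpow_left_injOn hq.ne' (lp.norm_nonneg' g) (lp.norm_nonneg' f) ?_
  simp only
  rw [lp.norm_rpow_eq_tsum hq, lp.norm_rpow_eq_tsum hq]
  simp only [hg]
  exact t.tsum_eq (fun i => ‖f i‖ ^ q.toReal)

def permLp (hq : 0 < q.toReal) (t : Equiv.Perm ℕ) :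
    lp (fun _ : ℕ => ℂ) q ≃ₗᵢ[ℂ] lp (fun _ : ℕ => ℂ) q where
  toLinearEquiv :=
    { toFun := fun f => ⟨fun x => f (t.symm x), memℓp_comp_equiv hq (lp.memℓp f) t.symm⟩
      invFun := fun f => ⟨fun x => f (t x), memℓp_comp_equiv hq (lp.memℓp f) t⟩
      left_inv := fun f => by ext x; simp
      right_inv := fun f => by ext x; simp
      map_add' := fun f g => rfl
      map_smul' := fun c f => rfl }
  norm_map' := fun f => norm_comp_equiv hq f t.symm _ (fun x => rfl)

@[simp] theorem permLp_apply (hq : 0 < q.toReal) (t : Equiv.Perm ℕ)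
    (f : lp (fun _ : ℕ => ℂ) q) (x : ℕ) : (permLp hq t f : ℕ → ℂ) x = f (t.symm x) := rfl

def permRep {G : Type*} [Group G] (hq : 0 < q.toReal) (a : G →* Equiv.Perm ℕ) :
    G →* (lp (fun _ : ℕ => ℂ) q ≃ₗᵢ[ℂ] lp (fun _ : ℕ => ℂ) q) :=
  MonoidHom.mk' (fun g => permLp hq (a g)) (by
    intro g h
    ext f x
    simp [permLp, map_mul]
    rfl)

@[simp] theorem permRep_apply {G : Type*} [Group G] (hq : 0 < q.toReal) (a : G →* Equiv.Perm ℕ)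
    (g : G) (f : lp (fun _ : ℕ => ℂ) q) (x : ℕ) :
    (permRep hq a g f : ℕ → ℂ) x = f ((a g).symm x) := rfl

theorem comp_symm_eq_self {f : ℕ → ℂ} (t : Equiv.Perm ℕ) (s : Finset ℕ)
    (hsupp : ∀ x, f x ≠ 0 → x ∈ s) (hfix : ∀ x ∈ s, t x = x) (x : ℕ) :
    f (t.symm x) = f x := by
  by_cases hx : x ∈ s
  · have : t.symm x = x := by
      conv_lhs => rw [← hfix x hx]
      exact t.symm_apply_apply x
    rw [this]
  · by_cases hy : f (t.symm x) = 0
    · rw [hy]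
      by_contra hfx
      exact hx (hsupp x fun h => hfx h.symm)
    · have hmem := hsupp _ hy
      have h2 : t (t.symm x) = t.symm x := hfix _ hmem
      rw [t.apply_symm_apply] at h2
      rw [← h2]

theorem permRep_fixes {G : Type*} [Group G] (hq : 0 < q.toReal) (a : G →* Equiv.Perm ℕ)
    {g : G} {f : lp (fun _ : ℕ => ℂ) q} (s : Finset ℕ)
    (hsupp : ∀ x, (f : ℕ → ℂ) x ≠ 0 → x ∈ s) (hfix : ∀ x ∈ s, a g x = x) :
    permRep hq a g f = f :=
  lp.ext (funext fun x => comp_symm_eq_self (a g) s hsupp hfix x)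

theorem permRep_key {G : Type*} [Group G] [TopologicalSpace G] [IsTopologicalGroup G]
    (hq : 0 < q.toReal) (hq' : q ≠ ⊤) (a : G →* Equiv.Perm ℕ)
    (hstab : ∀ x : ℕ, {g : G | a g x = x} ∈ nhds (1 : G)) (f : lp (fun _ : ℕ => ℂ) q)
    (ε : ℝ) (hε : 0 < ε) : {h : G | ‖permRep hq a h f - f‖ < ε} ∈ nhds (1 : G) := by
  have hs := (lp.hasSum_single hq' f)
  rw [HasSum, Metric.tendsto_nhds] at hs
  obtain ⟨s, hs⟩ := (Filter.eventually_atTop).1 (hs (ε / 3) (by linarith))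
  set f' : lp (fun _ : ℕ => ℂ) q := ∑ i ∈ s, lp.single q i ((f : ℕ → ℂ) i) with hf'
  have hdist : ‖f - f'‖ < ε / 3 := by
    have := hs s le_rfl
    rwa [dist_eq_norm, ← norm_neg, neg_sub] at this
  have hsupp : ∀ x, (f' : ℕ → ℂ) x ≠ 0 → x ∈ s := by
    intro x hx
    by_contra hxs
    apply hx
    rw [hf', lp.coeFn_sum, Finset.sum_apply]
    exact Finset.sum_eq_zero fun i hi => lp.single_apply_ne q i _ (fun h => hxs (h ▸ hi))
  have hW : (⋂ x ∈ s, {g : G | a g x = x}) ∈ nhds (1 : G) :=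
    (Filter.biInter_finset_mem s).2 fun x _ => hstab x
  refine Filter.mem_of_superset hW ?_
  intro h hh
  simp only [Set.mem_iInter] at hh
  have hfixed : permRep hq a h f' = f' :=
    permRep_fixes hq a s hsupp fun x hx => hh x hx
  have hdecomp : permRep hq a h f - f = permRep hq a h (f - f') + (f' - f) := by
    rw [map_sub, hfixed]; abel
  calc ‖permRep hq a h f - f‖ = ‖permRep hq a h (f - f') + (f' - f)‖ := by rw [hdecomp]
    _ ≤ ‖permRep hq a h (f - f')‖ + ‖f' - f‖ := norm_add_le _ _
    _ = ‖f - f'‖ + ‖f' - f‖ := by rw [(permRep hq a h).norm_map]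
    _ = ‖f - f'‖ + ‖f - f'‖ := by rw [norm_sub_rev f' f]
    _ < ε := by linarith

theorem permRep_continuous {G : Type*} [Group G] [TopologicalSpace G] [IsTopologicalGroup G]
    (hq : 0 < q.toReal) (hq' : q ≠ ⊤) (a : G →* Equiv.Perm ℕ)
    (hstab : ∀ x : ℕ, {g : G | a g x = x} ∈ nhds (1 : G)) (f : lp (fun _ : ℕ => ℂ) q) :
    Continuous fun g => permRep hq a g f := by
  rw [continuous_iff_continuousAt]
  intro g₀
  rw [ContinuousAt, Metric.tendsto_nhds]
  intro ε hε
  have hcont : Filter.Tendsto (fun g : G => g₀⁻¹ * g) (nhds g₀) (nhds 1) := by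
    have := (continuous_mul_left g₀⁻¹).tendsto g₀
    simpa using this
  have hev : ∀ᶠ g in nhds g₀, ‖permRep hq a (g₀⁻¹ * g) f - f‖ < ε :=
    hcont.eventually (permRep_key hq hq' a hstab f ε hε)
  refine hev.mono fun g hg => ?_
  have h1 : permRep hq a g f - permRep hq a g₀ f
      = permRep hq a g₀ (permRep hq a (g₀⁻¹ * g) f - f) := by
    rw [map_sub]
    congr 1
    have h2 : permRep hq a g₀ * permRep hq a (g₀⁻¹ * g) = permRep hq a g := by
      rw [← map_mul, mul_inv_cancel_left]
    calc permRep hq a g f = (permRep hq a g₀ * permRep hq a (g₀⁻¹ * g)) f := by rw [h2]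
      _ = permRep hq a g₀ (permRep hq a (g₀⁻¹ * g) f) := rfl
  rw [dist_eq_norm, h1, (permRep hq a g₀).norm_map]
  exact hg

/-- The permutation action of `G` on `Σ n, G ⧸ H n`. -/
def sigmaPerm {G : Type*} [Group G] (H : ℕ → Subgroup G) :
    G →* Equiv.Perm ((n : ℕ) × (G ⧸ H n)) :=
  MonoidHom.mk'
    (fun g =>
      { toFun := fun x => ⟨x.1, g • x.2⟩
        invFun := fun x => ⟨x.1, g⁻¹ • x.2⟩
        left_inv := fun x => by simp
        right_inv := fun x => by simp })
    (by
      intro g h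
      refine Equiv.ext fun x => ?_
      obtain ⟨n, s⟩ := x
      show (⟨n, (g * h) • s⟩ : (n : ℕ) × (G ⧸ H n)) = ⟨n, g • h • s⟩
      rw [mul_smul])

@[simp] theorem sigmaPerm_apply {G : Type*} [Group G] (H : ℕ → Subgroup G) (g : G)
    (x : (n : ℕ) × (G ⧸ H n)) : sigmaPerm H g x = ⟨x.1, g • x.2⟩ := rfl

/-- Transport of permutations along an equivalence, as a monoid hom. -/
def permCongrHom {X Y : Type*} (e : X ≃ Y) : Equiv.Perm X →* Equiv.Perm Y :=
  MonoidHom.mk' (fun t => (e.symm.trans t).trans e)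
    (by intro t s; ext y; simp [Equiv.Perm.mul_apply])

@[simp] theorem permCongrHom_apply {X Y : Type*} (e : X ≃ Y) (t : Equiv.Perm X) (y : Y) :
    permCongrHom e t y = e (t (e.symm y)) := rfl

@[simp] theorem permCongrHom_symm_apply {X Y : Type*} (e : X ≃ Y) (t : Equiv.Perm X) (y : Y) :
    (permCongrHom e t).symm y = e (t.symm (e.symm y)) := rfl

/-- A constant nonzero value on an infinite set is incompatible with `Memℓp`, `q < ∞`. -/
theorem const_eq_zero_of_memℓp {r : ℝ≥0∞} (hr : 0 < r.toReal) {φ : ℕ → ℂ}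
    (hφ : Memℓp φ r) {S : Set ℕ} (hS : S.Infinite) {c : ℂ} (hc : ∀ x ∈ S, φ x = c) :
    c = 0 := by
  by_contra h
  have h0 := (hφ.summable hr).tendsto_cofinite_zero
  rw [Metric.tendsto_nhds] at h0
  have hpos : 0 < ‖c‖ ^ r.toReal :=
    Real.rpow_pos_of_pos (norm_pos_iff.2 h) _
  have hfin := Filter.eventually_cofinite.1 (h0 _ hpos)
  refine hS ((hfin.subset ?_))
  intro x hx
  simp only [Set.mem_setOf_eq, not_lt]
  rw [hc x hx, Real.dist_eq, sub_zero, abs_of_nonneg (Real.rpow_nonneg (norm_nonneg _) _)]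

theorem dualPair_single {q : ℝ≥0∞} [Fact (1 ≤ q)] (φ : ℕ → ℂ) (x : ℕ) :
    (∑' y, φ y * (lp.single (E := fun _ : ℕ => ℂ) q x (1 : ℂ) : ℕ → ℂ) y) = φ x := by
  rw [tsum_eq_single x]
  · rw [lp.single_apply_self, mul_one]
  · intro y hy
    rw [lp.single_apply_ne q x _ hy, mul_zero]

theorem permRep_single {G : Type*} [Group G] {q : ℝ≥0∞} [Fact (1 ≤ q)] (hq : 0 < q.toReal)
    (a : G →* Equiv.Perm ℕ) (g : G) (x : ℕ) :
    permRep hq a g (lp.single q x (1 : ℂ)) = lp.single q (a g x) (1 : ℂ) := by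
  ext y
  rw [permRep_apply]
  by_cases hy : y = a g x
  · subst hy
    rw [(a g).symm_apply_apply, lp.single_apply_self, lp.single_apply_self]
  · rw [lp.single_apply_ne q (a g x) _ hy, lp.single_apply_ne q x]
    rw [Ne, Equiv.symm_apply_eq]
    exact hy

theorem norm_lp_single_one {q : ℝ≥0∞} [Fact (1 ≤ q)] (hq : 0 < q.toReal) (x : ℕ) :
    ‖lp.single (E := fun _ : ℕ => ℂ) q x (1 : ℂ)‖ = 1 := by
  have := lp.norm_single (E := fun _ : ℕ => ℂ) (ENNReal.toReal_pos_iff.1 hq).1 x (1 : ℂ)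
  simpa using this


/-- The action of `G` on `ℕ` obtained from the action on `Σ n, G ⧸ H n` by transport along `e`. -/
def theAct {G : Type*} [Group G] (H : ℕ → Subgroup G) (e : ((n : ℕ) × (G ⧸ H n)) ≃ ℕ) :
    G →* Equiv.Perm ℕ :=
  (permCongrHom e).comp (sigmaPerm H)

theorem theAct_apply {G : Type*} [Group G] (H : ℕ → Subgroup G)
    (e : ((n : ℕ) × (G ⧸ H n)) ≃ ℕ) (g : G) (x : ℕ) :
    theAct H e g x = e ⟨(e.symm x).1, g • (e.symm x).2⟩ := rfl

theorem theAct_mk {G : Type*} [Group G] (H : ℕ → Subgroup G)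
    (e : ((n : ℕ) × (G ⧸ H n)) ≃ ℕ) (g : G) (n : ℕ) (q : G ⧸ H n) :
    theAct H e g (e ⟨n, q⟩) = e ⟨n, g • q⟩ := by
  show e ⟨(e.symm (e ⟨n, q⟩)).1, g • (e.symm (e ⟨n, q⟩)).2⟩ = e ⟨n, g • q⟩
  rw [e.symm_apply_apply]

theorem theAct_stab {G : Type*} [Group G] [TopologicalSpace G] [IsTopologicalGroup G]
    (H : ℕ → Subgroup G) (hHopen : ∀ n, IsOpen ((H n : Set G)))
    (e : ((n : ℕ) × (G ⧸ H n)) ≃ ℕ) (x : ℕ) :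
    {g : G | theAct H e g x = x} ∈ nhds (1 : G) := by
  have hx : x = e (e.symm x) := (e.apply_symm_apply x).symm
  rw [hx]
  obtain ⟨n, s⟩ := e.symm x
  have hiff : ∀ g : G, (theAct H e g (e ⟨n, s⟩) = e ⟨n, s⟩) ↔ g • s = s := by
    intro g
    rw [theAct_mk]
    exact ⟨fun h => sigma_mk_injective (β := fun n : ℕ => G ⧸ H n) (e.injective h), fun h => by rw [h]⟩
  have hset : {g : G | theAct H e g (e ⟨n, s⟩) = e ⟨n, s⟩}
      = (fun g : G => (g * Quotient.out s)⁻¹ * Quotient.out s) ⁻¹' (H n : Set G) := by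
    ext g
    simp only [Set.mem_setOf_eq, Set.mem_preimage, SetLike.mem_coe, hiff g]
    conv_lhs => rw [← QuotientGroup.out_eq' s]
    rw [MulAction.Quotient.smul_mk]
    exact QuotientGroup.eq
  rw [hset]
  refine IsOpen.mem_nhds
    ((hHopen n).preimage (((continuous_id.mul continuous_const).inv).mul continuous_const)) ?_
  simp only [Set.mem_preimage, one_mul, SetLike.mem_coe, inv_mul_cancel]
  exact one_mem _

end TlpProof

/-- A second countable locally compact group with Property `(T_{ℓ_p})`
for some `1 < p < ∞` is compactly generated. -/
theorem compactly_generated_of_propertyTlp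
    (G : Type*) [Group G] [TopologicalSpace G] [IsTopologicalGroup G]
    [LocallyCompactSpace G] [SecondCountableTopology G] [T2Space G]
    (p : ℝ) (hp1 : 1 < p) (hT : HasPropertyTlp G p) :
    ∃ K : Set G, IsCompact K ∧ Subgroup.closure K = ⊤ := by
  classical
  by_contra hnc
  push_neg at hnc
  -- exponent facts
  set p' : ℝ≥0∞ := ENNReal.ofReal p with hp'
  have hp'1 : 1 < p' := ENNReal.one_lt_ofReal.2 hp1
  haveI : Fact (1 ≤ p') := ⟨hp'1.le⟩
  have hp'top : p' ≠ ⊤ := ENNReal.ofReal_ne_top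
  have hq : 0 < p'.toReal := ENNReal.toReal_pos (zero_lt_one.trans hp'1).ne' hp'top
  have hc0 : conjExp p' ≠ 0 := by
    rw [conjExp, Ne, ENNReal.inv_eq_zero]
    exact ne_top_of_le_ne_top ENNReal.one_ne_top tsub_le_self
  have hctop : conjExp p' ≠ ⊤ := by
    rw [conjExp, Ne, ENNReal.inv_eq_top, tsub_eq_zero_iff_le, not_le]
    exact ENNReal.inv_lt_one.2 hp'1
  have hcq : 0 < (conjExp p').toReal := ENNReal.toReal_pos hc0 hctop
  -- an increasing family of open, compactly generated subgroups covering G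
  obtain ⟨V, hVc, hV1⟩ := exists_compact_mem_nhds (1 : G)
  set S : ℕ → Set G := fun n => V ∪ compactCovering G n with hSdef
  have hScomp : ∀ n, IsCompact (S n) := fun n => hVc.union (isCompact_compactCovering G n)
  set H : ℕ → Subgroup G := fun n => Subgroup.closure (S n) with hHdef
  have hHmono : Monotone H := fun m n hmn =>
    Subgroup.closure_mono (Set.union_subset_union_right V (compactCovering_subset G hmn))
  have hHopen : ∀ n, IsOpen ((H n : Set G)) := fun n =>
    Subgroup.isOpen_of_mem_nhds _ (Filter.mem_of_superset hV1
      (Set.Subset.trans Set.subset_union_left Subgroup.subset_closure))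
  have hHcover : ∀ g : G, ∃ n, g ∈ H n := fun g => by
    obtain ⟨n, hn⟩ := exists_mem_compactCovering g
    exact ⟨n, Subgroup.subset_closure (Or.inr hn)⟩
  -- the quotients are infinite (otherwise G would be compactly generated)
  have hInf : ∀ n, Infinite (G ⧸ H n) := by
    intro n
    rw [← not_finite_iff_infinite]
    intro hfin
    set T : Set G := Set.range (fun q : G ⧸ H n => (Quotient.out q : G)) with hTdef
    have hTfin : T.Finite := Set.finite_range _
    refine hnc (S n ∪ T) ((hScomp n).union hTfin.isCompact) ?_
    rw [Subgroup.eq_top_iff']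
    intro g
    have h1 : (Quotient.out (QuotientGroup.mk (s := H n) g) : G)
        ∈ Subgroup.closure (S n ∪ T) :=
      Subgroup.subset_closure (Or.inr ⟨_, rfl⟩)
    have h2 : ((Quotient.out (QuotientGroup.mk (s := H n) g) : G))⁻¹ * g ∈ H n :=
      QuotientGroup.eq.mp (QuotientGroup.out_eq' (QuotientGroup.mk (s := H n) g))
    have h3 : ((Quotient.out (QuotientGroup.mk (s := H n) g) : G))⁻¹ * g
        ∈ Subgroup.closure (S n ∪ T) :=
      Subgroup.closure_mono Set.subset_union_left h2
    have h4 := mul_mem h1 h3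
    rwa [mul_inv_cancel_left] at h4
  -- the quotients are countable
  have hCount : ∀ n, Countable (G ⧸ H n) := by
    intro n
    obtain ⟨D, hDc, hDd⟩ := TopologicalSpace.exists_countable_dense G
    haveI := hDc.to_subtype
    refine Function.Surjective.countable
      (f := fun d : D => (QuotientGroup.mk (s := H n) (d : G))) ?_
    intro qq
    set U : Set G := {g : G | (QuotientGroup.mk (s := H n) g) = qq} with hUdef
    have hUeq : U = (fun g : G => g⁻¹ * Quotient.out qq) ⁻¹' (H n : Set G) := by
      ext g
      simp only [hUdef, Set.mem_setOf_eq, Set.mem_preimage, SetLike.mem_coe]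
      conv_lhs => rw [← QuotientGroup.out_eq' qq]
      exact QuotientGroup.eq
    have hUopen : IsOpen U := by
      rw [hUeq]
      exact (hHopen n).preimage ((continuous_inv.mul continuous_const))
    have hUne : U.Nonempty := ⟨Quotient.out qq, QuotientGroup.out_eq' qq⟩
    obtain ⟨d, hdU, hdD⟩ := hDd.inter_open_nonempty U hUopen hUne
    exact ⟨⟨d, hdD⟩, hdU⟩
  haveI : ∀ n, Countable (G ⧸ H n) := hCount
  haveI : ∀ n, Infinite (G ⧸ H n) := hInf
  haveI hCX : Countable ((n : ℕ) × (G ⧸ H n)) := inferInstance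
  haveI hIX : Infinite ((n : ℕ) × (G ⧸ H n)) := by
    have hinj : Function.Injective (fun q : G ⧸ H 0 => (⟨0, q⟩ : (n : ℕ) × (G ⧸ H n))) :=
      fun q1 q2 h12 => by injection h12
    exact Infinite.of_injective _ hinj
  obtain ⟨dX⟩ := nonempty_denumerable_iff.2 ⟨hCX, hIX⟩
  haveI := dX
  set e : ((n : ℕ) × (G ⧸ H n)) ≃ ℕ := Denumerable.eqv _ with hedef
  -- the orthogonal representation
  have hstab : ∀ x : ℕ, {g : G | TlpProof.theAct H e g x = x} ∈ nhds (1 : G) :=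
    TlpProof.theAct_stab H hHopen e
  set π : OrthRep G p' := ⟨TlpProof.permRep hq (TlpProof.theAct H e),
    TlpProof.permRep_continuous hq hp'top (TlpProof.theAct H e) hstab⟩ with hπdef
  have hπT : π.toFun = TlpProof.permRep hq (TlpProof.theAct H e) := rfl
  -- the almost invariant sequence
  set F : ℕ → lp (fun _ : ℕ => ℂ) p' :=
    fun n => lp.single p' (e ⟨n, QuotientGroup.mk (s := H n) (1 : G)⟩) (1 : ℂ) with hFdef
  have hFn : ∀ n, F n = lp.single p' (e ⟨n, QuotientGroup.mk (s := H n) (1 : G)⟩) (1 : ℂ) :=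
    fun n => rfl
  have hact : ∀ (g : G) (n : ℕ) (qq : G ⧸ H n),
      TlpProof.theAct H e g (e ⟨n, qq⟩) = e ⟨n, g • qq⟩ :=
    fun g n qq => TlpProof.theAct_mk H e g n qq
  have hsmul_one : ∀ (n : ℕ) (g : G), g ∈ H n →
      g • (QuotientGroup.mk (s := H n) (1 : G)) = QuotientGroup.mk (s := H n) (1 : G) := by
    intro n g hg
    rw [MulAction.Quotient.smul_mk]
    refine QuotientGroup.eq.mpr ?_
    rw [smul_eq_mul, mul_one, mul_one]
    exact inv_mem hg
  have hsmul_out : ∀ (n : ℕ) (qq : G ⧸ H n),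
      (Quotient.out qq) • (QuotientGroup.mk (s := H n) (1 : G)) = qq := by
    intro n qq
    rw [MulAction.Quotient.smul_mk, smul_eq_mul, mul_one]
    exact QuotientGroup.out_eq' qq
  refine hT π ⟨F, ?_, ?_, ?_⟩
  · -- the vectors lie in the annihilator of the dual invariant vectors
    intro n
    simp only [OrthRep.ann, Set.mem_setOf_eq]
    intro φ hφ
    obtain ⟨hmem, hinv⟩ := hφ
    have hconst : ∀ qq : G ⧸ H n,
        φ (e ⟨n, qq⟩) = φ (e ⟨n, QuotientGroup.mk (s := H n) (1 : G)⟩) := by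
      intro qq
      have h2 := hinv (Quotient.out qq) (F n)
      rw [hFn n, hπT, TlpProof.permRep_single hq _ _ _, hact _ n _, hsmul_out n qq] at h2
      calc φ (e ⟨n, qq⟩)
          = dualPair φ ((lp.single p' (e ⟨n, qq⟩) (1 : ℂ) :
              lp (fun _ : ℕ => ℂ) p') : ℕ → ℂ) :=
            (TlpProof.dualPair_single φ _).symm
        _ = dualPair φ ((lp.single p' (e ⟨n, QuotientGroup.mk (s := H n) (1 : G)⟩) (1 : ℂ) :
              lp (fun _ : ℕ => ℂ) p') : ℕ → ℂ) := h2
        _ = φ (e ⟨n, QuotientGroup.mk (s := H n) (1 : G)⟩) := TlpProof.dualPair_single φ _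
    have hSinf : (Set.range fun qq : G ⧸ H n => e ⟨n, qq⟩).Infinite := by
      haveI := hInf n
      exact Set.infinite_range_of_injective
        fun q1 q2 h12 => sigma_mk_injective (β := fun m : ℕ => G ⧸ H m) (e.injective h12)
    have hzero : φ (e ⟨n, QuotientGroup.mk (s := H n) (1 : G)⟩) = 0 := by
      refine TlpProof.const_eq_zero_of_memℓp hcq hmem hSinf ?_
      rintro x ⟨qq, rfl⟩
      exact hconst qq
    exact (TlpProof.dualPair_single φ _).trans hzero
  · -- unit vectors
    intro n
    rw [hFn n]
    exact TlpProof.norm_lp_single_one hq _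
  · -- almost invariance
    intro Q hQ ε hε
    have hcov : Q ⊆ ⋃ n, (H n : Set G) := fun g _ => Set.mem_iUnion.2 (hHcover g)
    obtain ⟨t, ht⟩ := hQ.elim_finite_subcover (fun n => (H n : Set G)) (fun n => hHopen n) hcov
    refine ⟨t.sup id, fun n hn g hg => ?_⟩
    have hgH : g ∈ H n := by
      obtain ⟨m, hm1, hm2⟩ := Set.mem_iUnion₂.1 (ht hg)
      exact hHmono (le_trans (Finset.le_sup (f := id) hm1) hn) hm2
    have hfixed : π.toFun g (F n) = F n := by
      rw [hFn n, hπT, TlpProof.permRep_single hq _ _ _, hact g n _, hsmul_one n g hgH]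
    rw [hfixed, sub_self, norm_zero]
    exact hε

end
end

section
/- Let G be a second countable locally compact group having Property (T_{ℓ_p}) for some real number p with 1 < p < ∞ and p ≠ 2, and let L be an open subgroup of G of finite index. Then L (with the subspace topology) has Property (T_{ℓ_p}). -/
open scoped ENNReal Pointwise
open Filter MeasureTheory

noncomputable section

set_option linter.unusedSectionVars false
set_option maxHeartbeats 2000000
namespace TlpAux


set_option linter.unusedSectionVars false
variable {ι κ : Type*} {p : ℝ≥0∞} [Fact (1 ≤ p)]

lemma memℓp_comp_equiv (hp : 0 < p.toReal) (e : ι ≃ κ) {f : κ → ℂ} (hf : Memℓp f p) :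
    Memℓp (f ∘ e) p :=
  memℓp_gen (((memℓp_gen_iff hp).1 hf).comp_injective e.injective)

/-- Reindexing isometry between `ℓ_p` spaces. -/
def lpCongr (hp : 0 < p.toReal) (e : ι ≃ κ) :
    lp (fun _ : ι => ℂ) p ≃ₗᵢ[ℂ] lp (fun _ : κ => ℂ) p where
  toLinearEquiv :=
  { toFun := fun f => ⟨(f : ι → ℂ) ∘ e.symm, memℓp_comp_equiv hp e.symm (lp.memℓp f)⟩
    invFun := fun f => ⟨(f : κ → ℂ) ∘ e, memℓp_comp_equiv hp e (lp.memℓp f)⟩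
    map_add' := fun f g => by ext x; simp [lp.coeFn_add]; rfl
    map_smul' := fun c f => by ext x; simp [lp.coeFn_smul]
    left_inv := fun f => by ext x; simp
    right_inv := fun f => by ext x; simp }
  norm_map' := fun f => by
    rw [lp.norm_eq_tsum_rpow hp, lp.norm_eq_tsum_rpow hp]
    exact congrArg (· ^ (1 / p.toReal)) (e.symm.tsum_eq fun i => ‖f i‖ ^ p.toReal)

@[simp] lemma lpCongr_apply (hp : 0 < p.toReal) (e : ι ≃ κ) (f : lp (fun _ : ι => ℂ) p) (x : κ) :
    (lpCongr hp e f : κ → ℂ) x = f (e.symm x) := rfl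



variable {Q : Type*} {X : Type*} [Fintype Q] [DecidableEq Q] {p : ℝ≥0∞} [Fact (1 ≤ p)]

lemma rpow_cancel {a b : ℝ} (ha : 0 ≤ a) (hb : 0 ≤ b) {t : ℝ} (ht : 0 < t)
    (h : a ^ t = b ^ t) : a = b := by
  have h2 := congrArg (· ^ t⁻¹) h
  simpa [← Real.rpow_mul ha, ← Real.rpow_mul hb, mul_inv_cancel₀ ht.ne'] using h2

lemma sliceMem (hp : 0 < p.toReal) {F : Q × ℕ → ℂ} (hF : Memℓp F p) (q : Q) :
    Memℓp (fun n => F (q, n)) p :=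
  memℓp_gen (((memℓp_gen_iff hp).1 hF).comp_injective
    (fun a b h => by simpa using (Prod.ext_iff.1 h).2))

lemma memℓp_of_slices (hp : 0 < p.toReal) {F : Q × ℕ → ℂ}
    (h : ∀ q, Memℓp (fun n => F (q, n)) p) : Memℓp F p := by
  apply memℓp_gen
  rw [summable_prod_of_nonneg (fun x => by positivity)]
  exact ⟨fun q => (memℓp_gen_iff hp).1 (h q), Summable.of_finite⟩

/-- The `q`-slice of an element of `ℓ_p(Q × ℕ)`. -/
def slice (hp : 0 < p.toReal) (F : lp (fun _ : Q × ℕ => ℂ) p) (q : Q) :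
    lp (fun _ : ℕ => ℂ) p :=
  ⟨fun n => F (q, n), sliceMem hp (lp.memℓp F) q⟩

@[simp] lemma slice_apply (hp : 0 < p.toReal) (F : lp (fun _ : Q × ℕ => ℂ) p) (q : Q) (n : ℕ) :
    (slice hp F q : ℕ → ℂ) n = F (q, n) := rfl

/-- The element of `ℓ_p(Q × ℕ)` supported on the `q`-slice with value `v`. -/
def psingle (hp : 0 < p.toReal) (q : Q) (v : lp (fun _ : ℕ => ℂ) p) :
    lp (fun _ : Q × ℕ => ℂ) p :=
  ⟨fun x => if x.1 = q then v x.2 else 0, by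
    apply memℓp_of_slices hp
    intro q'
    by_cases h : q' = q
    · simpa [h] using lp.memℓp v
    · simpa [h] using zero_mem_ℓp' (p := p)⟩

@[simp] lemma psingle_apply (hp : 0 < p.toReal) (q : Q) (v : lp (fun _ : ℕ => ℂ) p)
    (x : Q × ℕ) : (psingle hp q v : Q × ℕ → ℂ) x = if x.1 = q then v x.2 else 0 := rfl

lemma norm_rpow_eq_sum_slices (hp : 0 < p.toReal) (F : lp (fun _ : Q × ℕ => ℂ) p) :
    ‖F‖ ^ p.toReal = ∑ q, ‖slice hp F q‖ ^ p.toReal := by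
  rw [lp.norm_rpow_eq_tsum hp]
  rw [Summable.tsum_prod' ((memℓp_gen_iff hp).1 (lp.memℓp F))
    (fun q => (memℓp_gen_iff hp).1 (sliceMem hp (lp.memℓp F) q))]
  rw [tsum_fintype]
  exact Finset.sum_congr rfl fun q _ => by rw [lp.norm_rpow_eq_tsum hp]; rfl

lemma norm_psingle (hp : 0 < p.toReal) (q : Q) (v : lp (fun _ : ℕ => ℂ) p) :
    ‖psingle hp q v‖ = ‖v‖ := by
  apply rpow_cancel (norm_nonneg _) (norm_nonneg _) hp
  rw [norm_rpow_eq_sum_slices hp]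
  rw [Finset.sum_eq_single q]
  · congr 1
    apply congrArg
    ext n; simp
  · intro q' _ hq'
    have : slice hp (psingle hp q v) q' = 0 := by ext n; simp [hq']
    simp [this, Real.zero_rpow hp.ne']
  · simp

lemma eq_sum_psingle (hp : 0 < p.toReal) (F : lp (fun _ : Q × ℕ => ℂ) p) :
    F = ∑ q, psingle hp q (slice hp F q) := by
  ext x
  rw [lp.coeFn_sum, Finset.sum_apply]
  simp only [psingle_apply, slice_apply]
  rw [Finset.sum_ite_eq Finset.univ x.1 (fun q => F (q, x.2))]
  simp



variable {G : Type*} [Group G] [TopologicalSpace G] [IsTopologicalGroup G] (L : Subgroup G)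

/-- The cocycle of the induced representation: `c(g,q) = s(q)⁻¹ g s(g⁻¹ q) ∈ L`. -/
def coc (g : G) (q : G ⧸ L) : L :=
  ⟨q.out⁻¹ * g * (g⁻¹ • q).out, by
    rw [mul_assoc, ← QuotientGroup.eq, QuotientGroup.out_eq']
    rw [← smul_eq_mul, MulAction.Quotient.mk_smul_out, smul_inv_smul] ⟩

lemma coc_spec (g : G) (q : G ⧸ L) :
    (coc L g q : G) = q.out⁻¹ * g * (g⁻¹ • q).out := rfl

lemma coc_one (q : G ⧸ L) : coc L 1 q = 1 := by
  apply Subtype.ext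
  simp [coc_spec]

lemma coc_mul (g₁ g₂ : G) (q : G ⧸ L) :
    coc L (g₁ * g₂) q = coc L g₁ q * coc L g₂ (g₁⁻¹ • q) := by
  apply Subtype.ext
  show _ = (_ : G) * _
  rw [coc_spec, coc_spec, coc_spec]
  rw [mul_inv_rev, smul_smul]
  group

/-- `g ↦ g⁻¹ • q` is continuous. -/
lemma continuous_invSmul (q : G ⧸ L) : Continuous fun g : G => g⁻¹ • q := by
  have h1 : Continuous fun g : G => g⁻¹ * q.out := by continuity
  have h2 : (fun g : G => g⁻¹ • q) = fun g => QuotientGroup.mk (g⁻¹ * q.out) := by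
    funext g
    rw [← MulAction.Quotient.mk_smul_out L g⁻¹ q]
    rfl
  rw [h2]
  exact continuous_quot_mk.comp h1

lemma continuous_coc [DiscreteTopology (G ⧸ L)] (q : G ⧸ L) :
    Continuous fun g : G => coc L g q := by
  apply Continuous.subtype_mk
  apply Continuous.mul
  · exact continuous_const.mul continuous_id
  · exact (continuous_of_discreteTopology (α := G ⧸ L)).comp (continuous_invSmul L q)


section Rep

variable {G : Type*} [Group G] [TopologicalSpace G] [IsTopologicalGroup G] {L : Subgroup G}
  {p : ℝ≥0∞} [Fact (1 ≤ p)] [Fintype (G ⧸ L)] [DecidableEq (G ⧸ L)]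

/-- The induced action map on `ℓ_p((G⧸L) × ℕ)`. -/
def indFun (π : OrthRep L p) (hp : 0 < p.toReal) (g : G)
    (F : lp (fun _ : (G ⧸ L) × ℕ => ℂ) p) : lp (fun _ : (G ⧸ L) × ℕ => ℂ) p :=
  ⟨fun x => (π.toFun (coc L g x.1) (slice hp F (g⁻¹ • x.1))) x.2,
   memℓp_of_slices hp fun q => lp.memℓp (π.toFun (coc L g q) (slice hp F (g⁻¹ • q)))⟩

lemma slice_indFun (π : OrthRep L p) (hp : 0 < p.toReal) (g : G)
    (F : lp (fun _ : (G ⧸ L) × ℕ => ℂ) p) (q : G ⧸ L) :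
    slice hp (indFun π hp g F) q = π.toFun (coc L g q) (slice hp F (g⁻¹ • q)) := by
  ext n; rfl

lemma slice_add (hp : 0 < p.toReal) (A B : lp (fun _ : (G ⧸ L) × ℕ => ℂ) p) (q : G ⧸ L) :
    slice hp (A + B) q = slice hp A q + slice hp B q := by
  ext n; rfl

lemma slice_smul (hp : 0 < p.toReal) (c : ℂ) (A : lp (fun _ : (G ⧸ L) × ℕ => ℂ) p) (q : G ⧸ L) :
    slice hp (c • A) q = c • slice hp A q := by
  ext n; rfl

lemma norm_indFun (π : OrthRep L p) (hp : 0 < p.toReal) (g : G)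
    (F : lp (fun _ : (G ⧸ L) × ℕ => ℂ) p) : ‖indFun π hp g F‖ = ‖F‖ := by
  apply rpow_cancel (norm_nonneg _) (norm_nonneg _) hp
  rw [norm_rpow_eq_sum_slices hp, norm_rpow_eq_sum_slices hp]
  have h1 : ∀ q, ‖slice hp (indFun π hp g F) q‖ = ‖slice hp F (g⁻¹ • q)‖ := fun q => by
    rw [slice_indFun]; exact (π.toFun (coc L g q)).norm_map _
  calc ∑ q, ‖slice hp (indFun π hp g F) q‖ ^ p.toReal
      = ∑ q, ‖slice hp F (g⁻¹ • q)‖ ^ p.toReal := by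
        exact Finset.sum_congr rfl fun q _ => by rw [h1]
    _ = ∑ q, ‖slice hp F q‖ ^ p.toReal :=
        Equiv.sum_comp (MulAction.toPerm (g⁻¹ : G)) (fun q => ‖slice hp F q‖ ^ p.toReal)

lemma indFun_one (π : OrthRep L p) (hp : 0 < p.toReal)
    (F : lp (fun _ : (G ⧸ L) × ℕ => ℂ) p) : indFun π hp 1 F = F := by
  ext x
  show (π.toFun (coc L 1 x.1) (slice hp F ((1 : G)⁻¹ • x.1))) x.2 = F x
  rw [coc_one, inv_one, one_smul, map_one]
  rfl

lemma indFun_mul (π : OrthRep L p) (hp : 0 < p.toReal) (g₁ g₂ : G)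
    (F : lp (fun _ : (G ⧸ L) × ℕ => ℂ) p) :
    indFun π hp (g₁ * g₂) F = indFun π hp g₁ (indFun π hp g₂ F) := by
  ext x
  show (π.toFun (coc L (g₁ * g₂) x.1) (slice hp F ((g₁ * g₂)⁻¹ • x.1))) x.2
    = (π.toFun (coc L g₁ x.1) (slice hp (indFun π hp g₂ F) (g₁⁻¹ • x.1))) x.2
  rw [slice_indFun, coc_mul, map_mul]
  have : (g₁ * g₂)⁻¹ • x.1 = g₂⁻¹ • (g₁⁻¹ • x.1) := by rw [mul_inv_rev, mul_smul]
  rw [this]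
  rfl

lemma indFun_add (π : OrthRep L p) (hp : 0 < p.toReal) (g : G)
    (A B : lp (fun _ : (G ⧸ L) × ℕ => ℂ) p) :
    indFun π hp g (A + B) = indFun π hp g A + indFun π hp g B := by
  ext x
  show (π.toFun (coc L g x.1) (slice hp (A + B) (g⁻¹ • x.1))) x.2 = _
  rw [slice_add, map_add]
  rfl

lemma indFun_smul (π : OrthRep L p) (hp : 0 < p.toReal) (g : G) (c : ℂ)
    (A : lp (fun _ : (G ⧸ L) × ℕ => ℂ) p) :
    indFun π hp g (c • A) = c • indFun π hp g A := by
  ext x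
  show (π.toFun (coc L g x.1) (slice hp (c • A) (g⁻¹ • x.1))) x.2 = _
  rw [slice_smul, _root_.map_smul]
  rfl

/-- The induced action as a linear isometry equivalence. -/
def indEquiv (π : OrthRep L p) (hp : 0 < p.toReal) (g : G) :
    lp (fun _ : (G ⧸ L) × ℕ => ℂ) p ≃ₗᵢ[ℂ] lp (fun _ : (G ⧸ L) × ℕ => ℂ) p where
  toLinearEquiv :=
  { toFun := indFun π hp g
    invFun := indFun π hp g⁻¹
    map_add' := indFun_add π hp g
    map_smul' := indFun_smul π hp g
    left_inv := fun F => by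
      show indFun π hp g⁻¹ (indFun π hp g F) = F
      rw [← indFun_mul, inv_mul_cancel, indFun_one]
    right_inv := fun F => by
      show indFun π hp g (indFun π hp g⁻¹ F) = F
      rw [← indFun_mul, mul_inv_cancel, indFun_one] }
  norm_map' := norm_indFun π hp g

lemma indEquiv_apply (π : OrthRep L p) (hp : 0 < p.toReal) (g : G)
    (F : lp (fun _ : (G ⧸ L) × ℕ => ℂ) p) : indEquiv π hp g F = indFun π hp g F := rfl

/-- The induced homomorphism into the isometry group. -/
def indHom (π : OrthRep L p) (hp : 0 < p.toReal) :
    G →* (lp (fun _ : (G ⧸ L) × ℕ => ℂ) p ≃ₗᵢ[ℂ] lp (fun _ : (G ⧸ L) × ℕ => ℂ) p) where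
  toFun := indEquiv π hp
  map_one' := by
    apply LinearIsometryEquiv.ext
    intro F
    rw [indEquiv_apply, indFun_one]
    rfl
  map_mul' := fun g₁ g₂ => by
    apply LinearIsometryEquiv.ext
    intro F
    rw [LinearIsometryEquiv.coe_mul, Function.comp_apply, indEquiv_apply, indEquiv_apply,
      indEquiv_apply, indFun_mul]

lemma sub_eq_sum_psingle (hp : 0 < p.toReal) (A B : lp (fun _ : (G ⧸ L) × ℕ => ℂ) p) :
    A - B = ∑ q, psingle hp q (slice hp A q - slice hp B q) := by
  ext x
  rw [lp.coeFn_sum, Finset.sum_apply]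
  simp only [psingle_apply, lp.coeFn_sub, Pi.sub_apply, slice_apply]
  rw [Finset.sum_ite_eq Finset.univ x.1 (fun q => A (q, x.2) - B (q, x.2))]
  simp

lemma norm_sub_le_sum (hp : 0 < p.toReal) (A B : lp (fun _ : (G ⧸ L) × ℕ => ℂ) p) :
    ‖A - B‖ ≤ ∑ q, ‖slice hp A q - slice hp B q‖ := by
  rw [sub_eq_sum_psingle hp A B]
  refine (norm_sum_le _ _).trans ?_
  exact Finset.sum_le_sum fun q _ => le_of_eq (norm_psingle hp q _)

lemma continuous_indFun [DiscreteTopology (G ⧸ L)] (π : OrthRep L p) (hp : 0 < p.toReal)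
    (F : lp (fun _ : (G ⧸ L) × ℕ => ℂ) p) : Continuous fun g => indFun π hp g F := by
  rw [continuous_iff_continuousAt]
  intro g₀
  set v : (G ⧸ L) → lp (fun _ : ℕ => ℂ) p := fun q => slice hp F (g₀⁻¹ • q) with hv
  have hconst : ∀ᶠ g in nhds g₀, ∀ q : G ⧸ L, g⁻¹ • q = g₀⁻¹ • q := by
    rw [Filter.eventually_all]
    intro q
    have : IsOpen {g : G | g⁻¹ • q = g₀⁻¹ • q} :=
      (continuous_invSmul L q).isOpen_preimage {g₀⁻¹ • q} (isOpen_discrete _)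
    exact this.mem_nhds rfl
  have hcont : ∀ q : G ⧸ L, Continuous fun g : G =>
      π.toFun (coc L g q) (v q) := fun q =>
    (π.continuous_apply (v q)).comp (continuous_coc L q)
  have key : Filter.Tendsto
      (fun g => ∑ q, ‖π.toFun (coc L g q) (v q) - π.toFun (coc L g₀ q) (v q)‖)
      (nhds g₀) (nhds 0) := by
    have hc : Continuous fun g =>
        ∑ q, ‖π.toFun (coc L g q) (v q) - π.toFun (coc L g₀ q) (v q)‖ :=
      continuous_finset_sum _ fun q _ => ((hcont q).sub continuous_const).norm
    have h0 : ∑ q : G ⧸ L, ‖π.toFun (coc L g₀ q) (v q) - π.toFun (coc L g₀ q) (v q)‖ = 0 := by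
      simp
    have key2 : Filter.Tendsto
        (fun g => ∑ q, ‖π.toFun (coc L g q) (v q) - π.toFun (coc L g₀ q) (v q)‖)
        (nhds g₀) (nhds (∑ q, ‖π.toFun (coc L g₀ q) (v q) - π.toFun (coc L g₀ q) (v q)‖)) :=
      hc.continuousAt
    rwa [h0] at key2
  rw [ContinuousAt, tendsto_iff_dist_tendsto_zero]
  refine squeeze_zero' (Filter.Eventually.of_forall fun g => dist_nonneg) ?_ key
  filter_upwards [hconst] with g hg
  rw [dist_eq_norm]
  refine (norm_sub_le_sum hp _ _).trans ?_
  apply le_of_eq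
  refine Finset.sum_congr rfl fun q _ => ?_
  rw [slice_indFun, slice_indFun, hg q]

/-- The induced representation, conjugated back to `ℓ_p(ℕ)`. -/
def inducedRep [DiscreteTopology (G ⧸ L)] (π : OrthRep L p) (hp : 0 < p.toReal)
    (e : (G ⧸ L) × ℕ ≃ ℕ) : OrthRep G p where
  toFun :=
  { toFun := fun g => ((lpCongr hp e).symm.trans (indEquiv π hp g)).trans (lpCongr hp e)
    map_one' := by
      apply LinearIsometryEquiv.ext
      intro f
      show lpCongr hp e (indEquiv π hp 1 ((lpCongr hp e).symm f)) = f
      rw [indEquiv_apply, indFun_one]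
      exact (lpCongr hp e).apply_symm_apply f
    map_mul' := fun g₁ g₂ => by
      apply LinearIsometryEquiv.ext
      intro f
      show lpCongr hp e (indEquiv π hp (g₁ * g₂) ((lpCongr hp e).symm f))
        = lpCongr hp e (indEquiv π hp g₁ ((lpCongr hp e).symm
            (lpCongr hp e (indEquiv π hp g₂ ((lpCongr hp e).symm f)))))
      rw [(lpCongr hp e).symm_apply_apply]
      rw [indEquiv_apply, indEquiv_apply, indEquiv_apply, indFun_mul] }
  continuous_apply := fun f => by
    show Continuous fun g => lpCongr hp e (indFun π hp g ((lpCongr hp e).symm f))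
    exact (lpCongr hp e).continuous.comp (continuous_indFun π hp _)

end Rep

section Conj

variable {pr : ℝ}

lemma conjExp_ofReal (hp1 : 1 < pr) :
    conjExp (ENNReal.ofReal pr) = ENNReal.ofReal (pr / (pr - 1)) := by
  have hp0 : 0 < pr := lt_trans one_pos hp1
  have h1 : (0:ℝ) < 1 - pr⁻¹ := by
    rw [sub_pos]
    rw [inv_lt_one_iff₀]
    right; exact hp1
  rw [conjExp, ← ENNReal.ofReal_inv_of_pos hp0]
  rw [show (1 : ℝ≥0∞) = ENNReal.ofReal (1:ℝ) by simp]
  rw [← ENNReal.ofReal_sub _ (by positivity)]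
  rw [← ENNReal.ofReal_inv_of_pos h1]
  congr 1
  rw [show 1 - pr⁻¹ = (pr - 1) / pr by field_simp, inv_div]

lemma conjExp_toReal (hp1 : 1 < pr) :
    (conjExp (ENNReal.ofReal pr)).toReal = pr / (pr - 1) := by
  rw [conjExp_ofReal hp1, ENNReal.toReal_ofReal (div_nonneg (by linarith) (by linarith))]

lemma conjExp_toReal_pos (hp1 : 1 < pr) : 0 < (conjExp (ENNReal.ofReal pr)).toReal := by
  rw [conjExp_toReal hp1]
  have : 0 < pr - 1 := by linarith
  positivity

lemma isConj (hp1 : 1 < pr) :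
    (ENNReal.ofReal pr).toReal.HolderConjugate (conjExp (ENNReal.ofReal pr)).toReal := by
  rw [ENNReal.toReal_ofReal (by linarith : (0:ℝ) ≤ pr), conjExp_toReal hp1]
  exact (Real.holderConjugate_iff_eq_conjExponent hp1).2 rfl

lemma summable_mul_of_memℓp (hp1 : 1 < pr) [Fact (1 ≤ ENNReal.ofReal pr)] {φ : ℕ → ℂ}
    (hφ : Memℓp φ (conjExp (ENNReal.ofReal pr)))
    (f : lp (fun _ : ℕ => ℂ) (ENNReal.ofReal pr)) :
    Summable fun n => φ n * f n := by
  have h := lp.summable_mul (isConj hp1) f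
    (⟨φ, hφ⟩ : lp (fun _ : ℕ => ℂ) (conjExp (ENNReal.ofReal pr)))
  refine Summable.of_norm (h.congr fun n => ?_)
  show ‖f n‖ * ‖φ n‖ = ‖φ n * f n‖
  rw [norm_mul, mul_comm]

end Conj

section Tsums

variable {Q : Type*} [Fintype Q] [DecidableEq Q] {p : ℝ≥0∞} [Fact (1 ≤ p)]

lemma summable_of_slices_summable {h : Q × ℕ → ℂ}
    (hs : ∀ q, Summable fun n => h (q, n)) : Summable h := by
  have he : ∀ q₀ : Q, Summable (fun x : Q × ℕ => if x.1 = q₀ then h x else 0) := by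
    intro q₀
    have hinj : Function.Injective (fun n : ℕ => ((q₀, n) : Q × ℕ)) := fun a b hab => by
      simpa using (Prod.ext_iff.1 hab).2
    have hzero : ∀ x : Q × ℕ, x ∉ Set.range (fun n : ℕ => ((q₀, n) : Q × ℕ)) →
        (if x.1 = q₀ then h x else 0) = 0 := by
      intro x hx
      have : x.1 ≠ q₀ := by
        intro hh
        exact hx ⟨x.2, by rw [← hh]⟩
      simp [this]
    refine (hinj.summable_iff hzero).1 ?_
    exact (hs q₀).congr fun n => by simp
  have hrw : h = fun x => ∑ q₀, if x.1 = q₀ then h x else 0 := by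
    funext x
    rw [Finset.sum_ite_eq Finset.univ x.1 (fun _ => h x)]
    simp
  rw [hrw]
  exact summable_sum fun q₀ _ => he q₀

lemma dualPair_lpCongr (hp : 0 < p.toReal) (e : Q × ℕ ≃ ℕ) (φ : ℕ → ℂ)
    (F : lp (fun _ : Q × ℕ => ℂ) p) :
    dualPair φ (lpCongr hp e F) = dualPair (fun x => φ (e x)) (F : Q × ℕ → ℂ) := by
  rw [dualPair, dualPair, ← Equiv.tsum_eq e (fun k => φ k * (lpCongr hp e F : ℕ → ℂ) k)]
  exact tsum_congr fun x => by simp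

lemma dualPair_psingle (hp : 0 < p.toReal) (q : Q) (ψ : Q × ℕ → ℂ)
    (v : lp (fun _ : ℕ => ℂ) p) :
    dualPair ψ ((psingle hp q v : lp (fun _ : Q × ℕ => ℂ) p) : Q × ℕ → ℂ)
      = dualPair (fun n => ψ (q, n)) v := by
  have hinj : Function.Injective (fun n : ℕ => ((q, n) : Q × ℕ)) := fun a b hab => by
    simpa using (Prod.ext_iff.1 hab).2
  have hsupp : Function.support
      (fun x : Q × ℕ => ψ x * (psingle hp q v : Q × ℕ → ℂ) x) ⊆
      Set.range (fun n : ℕ => ((q, n) : Q × ℕ)) := by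
    intro x hx
    rcases eq_or_ne x.1 q with h | h
    · exact ⟨x.2, by rw [← h]⟩
    · exfalso
      apply hx
      simp [h]
  rw [dualPair, dualPair, ← Function.Injective.tsum_eq hinj hsupp]
  exact tsum_congr fun n => by simp

lemma tsum_slices_zero {h : Q × ℕ → ℂ}
    (hs : ∀ q, Summable fun m => h (q, m))
    (h0 : ∀ q, ∑' m, h (q, m) = 0) : ∑' x, h x = 0 := by
  rw [Summable.tsum_prod' (summable_of_slices_summable hs) hs, tsum_fintype]
  exact Finset.sum_eq_zero fun q _ => h0 q

end Tsums

section Spread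

variable {Q : Type*} [Fintype Q] [DecidableEq Q] {p : ℝ≥0∞} [Fact (1 ≤ p)]

/-- The element of `ℓ_p(Q × ℕ)` which is `v` on each slice. -/
def spread (hp : 0 < p.toReal) (v : lp (fun _ : ℕ => ℂ) p) : lp (fun _ : Q × ℕ => ℂ) p :=
  ⟨fun x => v x.2, memℓp_of_slices hp fun _ => lp.memℓp v⟩

@[simp] lemma spread_apply (hp : 0 < p.toReal) (v : lp (fun _ : ℕ => ℂ) p) (x : Q × ℕ) :
    (spread hp v : Q × ℕ → ℂ) x = v x.2 := rfl

lemma slice_spread (hp : 0 < p.toReal) (v : lp (fun _ : ℕ => ℂ) p) (q : Q) :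
    slice hp (spread hp v : lp (fun _ : Q × ℕ => ℂ) p) q = v := by
  ext n; rfl

lemma norm_spread_rpow (hp : 0 < p.toReal) (v : lp (fun _ : ℕ => ℂ) p) :
    ‖(spread hp v : lp (fun _ : Q × ℕ => ℂ) p)‖ ^ p.toReal
      = (Fintype.card Q : ℝ) * ‖v‖ ^ p.toReal := by
  rw [norm_rpow_eq_sum_slices hp]
  rw [Finset.sum_congr rfl fun q _ => by rw [slice_spread]]
  rw [Finset.sum_const, Finset.card_univ, nsmul_eq_mul]

end Spread

section PsingleAction

variable {G : Type*} [Group G] [TopologicalSpace G] [IsTopologicalGroup G] {L : Subgroup G}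
  {p : ℝ≥0∞} [Fact (1 ≤ p)] [Fintype (G ⧸ L)] [DecidableEq (G ⧸ L)]

lemma smul_conj_out (q : G ⧸ L) (l : L) :
    ((q.out * (l : G) * q.out⁻¹) • q : G ⧸ L) = q := by
  have h : (q.out * (l : G) * q.out⁻¹) * q.out = q.out * l := by group
  calc (q.out * (l : G) * q.out⁻¹) • q
      = (q.out * (l : G) * q.out⁻¹) • (QuotientGroup.mk q.out : G ⧸ L) := by
        rw [QuotientGroup.out_eq']
    _ = QuotientGroup.mk ((q.out * (l : G) * q.out⁻¹) * q.out) :=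
        MulAction.Quotient.smul_mk L _ _
    _ = QuotientGroup.mk (q.out * l) := by rw [h]
    _ = QuotientGroup.mk q.out := QuotientGroup.mk_mul_of_mem q.out l.2
    _ = q := QuotientGroup.out_eq' q

lemma indFun_psingle (π : OrthRep L p) (hp : 0 < p.toReal) (q : G ⧸ L) (l : L)
    (v : lp (fun _ : ℕ => ℂ) p) :
    indFun π hp (q.out * (l : G) * q.out⁻¹) (psingle hp q v)
      = psingle hp q (π.toFun l v) := by
  set g : G := q.out * (l : G) * q.out⁻¹ with hg
  have hgq : g • q = q := smul_conj_out q l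
  have hginvq : g⁻¹ • q = q := by
    conv_lhs => rw [← hgq]
    rw [inv_smul_smul]
  ext x
  show (π.toFun (coc L g x.1) (slice hp (psingle hp q v) (g⁻¹ • x.1))) x.2
    = (psingle hp q (π.toFun l v) : (G ⧸ L) × ℕ → ℂ) x
  rcases eq_or_ne x.1 q with hx | hx
  · rw [hx, hginvq]
    have hslice : slice hp (psingle hp q v) q = v := by
      ext n; simp
    have hout : (g⁻¹ • q).out = q.out := by rw [hginvq]
    have hcoc : coc L g q = l := by
      apply Subtype.ext
      rw [coc_spec, hout, hg]
      group
    rw [hslice, hcoc]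
    simp [hx]
  · have h1 : g⁻¹ • x.1 ≠ q := by
      intro hcon
      apply hx
      rw [← hgq, ← hcon, smul_inv_smul]
    have hslice : slice hp (psingle hp q v) (g⁻¹ • x.1) = 0 := by
      ext n; simp [h1]
    rw [hslice, map_zero]
    simp [hx]

lemma inducedRep_apply [DiscreteTopology (G ⧸ L)] (π : OrthRep L p) (hp : 0 < p.toReal)
    (e : (G ⧸ L) × ℕ ≃ ℕ) (g : G) (x : lp (fun _ : ℕ => ℂ) p) :
    (inducedRep π hp e).toFun g x
      = lpCongr hp e (indFun π hp g ((lpCongr hp e).symm x)) := rfl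

end PsingleAction

end TlpAux


namespace TlpAux
section Main

variable {G : Type*} [Group G] [TopologicalSpace G] [IsTopologicalGroup G] {L : Subgroup G}
  [Fintype (G ⧸ L)] [DecidableEq (G ⧸ L)] [DiscreteTopology (G ⧸ L)]
  {pr : ℝ} [Fact (1 ≤ ENNReal.ofReal pr)]

lemma norm_induced_vec (hp1 : 1 < pr) (hp : 0 < (ENNReal.ofReal pr).toReal)
    (e : ((G ⧸ L) × ℕ) ≃ ℕ)
    (v : lp (fun _ : ℕ => ℂ) (ENNReal.ofReal pr)) (hv : ‖v‖ = 1) :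
    ‖lpCongr hp e ((((Fintype.card (G ⧸ L) : ℝ) ^ (-(1/pr)) : ℝ) : ℂ) •
      (spread hp v : lp (fun _ : (G ⧸ L) × ℕ => ℂ) (ENNReal.ofReal pr)))‖ = 1 := by
  have hp0 : (0:ℝ) < pr := lt_trans one_pos hp1
  have hpt : (ENNReal.ofReal pr).toReal = pr := ENNReal.toReal_ofReal hp0.le
  have hk1 : (1:ℝ) ≤ (Fintype.card (G ⧸ L) : ℝ) := by
    have : 0 < Fintype.card (G ⧸ L) := Fintype.card_pos
    exact_mod_cast this
  have hk0 : (0:ℝ) < (Fintype.card (G ⧸ L) : ℝ) := lt_of_lt_of_le one_pos hk1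
  have ha0 : (0:ℝ) < (Fintype.card (G ⧸ L) : ℝ) ^ (-(1/pr)) := Real.rpow_pos_of_pos hk0 _
  rw [LinearIsometryEquiv.norm_map, norm_smul]
  have hna : ‖((((Fintype.card (G ⧸ L) : ℝ) ^ (-(1/pr)) : ℝ)) : ℂ)‖
      = (Fintype.card (G ⧸ L) : ℝ) ^ (-(1/pr)) := by
    rw [Complex.norm_real, Real.norm_eq_abs, abs_of_pos ha0]
  have h2 : ‖(spread hp v : lp (fun _ : (G ⧸ L) × ℕ => ℂ) (ENNReal.ofReal pr))‖
      = (Fintype.card (G ⧸ L) : ℝ) ^ (1/pr) := by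
    apply rpow_cancel (norm_nonneg _) (by positivity) hp
    rw [norm_spread_rpow hp, hv, hpt, Real.one_rpow, mul_one,
      ← Real.rpow_mul hk0.le, one_div, inv_mul_cancel₀ hp0.ne', Real.rpow_one]
  rw [hna, h2, ← Real.rpow_add hk0, neg_add_cancel, Real.rpow_zero]

lemma induced_diff_bound (hp : 0 < (ENNReal.ofReal pr).toReal)
    (π : OrthRep L (ENNReal.ofReal pr)) (e : ((G ⧸ L) × ℕ) ≃ ℕ) (g : G)
    {a : ℝ} (ha0 : 0 < a) (ha1 : a ≤ 1)
    (v : lp (fun _ : ℕ => ℂ) (ENNReal.ofReal pr)) {ε' : ℝ}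
    (hb : ∀ q : G ⧸ L, ‖π.toFun (coc L g q) v - v‖ ≤ ε') :
    ‖(inducedRep π hp e).toFun g (lpCongr hp e ((a : ℂ) • spread hp v))
      - lpCongr hp e ((a : ℂ) • spread hp v)‖ ≤ (Fintype.card (G ⧸ L) : ℝ) * ε' := by
  rw [inducedRep_apply, LinearIsometryEquiv.symm_apply_apply,
    ← map_sub (lpCongr hp e), LinearIsometryEquiv.norm_map]
  refine le_trans (norm_sub_le_sum hp _ _) ?_
  have hna : ‖(a:ℂ)‖ = a := by rw [Complex.norm_real, Real.norm_eq_abs, abs_of_pos ha0]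
  have hterm : ∀ q : G ⧸ L,
      ‖slice hp (indFun π hp g ((a : ℂ) • spread hp v)) q
        - slice hp ((a : ℂ) • spread hp v) q‖ ≤ ε' := by
    intro q
    rw [slice_indFun, slice_smul, slice_smul, slice_spread, slice_spread,
      _root_.map_smul, ← smul_sub, norm_smul, hna]
    calc a * ‖π.toFun (coc L g q) v - v‖
        ≤ 1 * ‖π.toFun (coc L g q) v - v‖ :=
          mul_le_mul_of_nonneg_right ha1 (norm_nonneg _)
      _ = ‖π.toFun (coc L g q) v - v‖ := one_mul _
      _ ≤ ε' := hb q
  calc ∑ q : G ⧸ L, ‖slice hp (indFun π hp g ((a : ℂ) • spread hp v)) q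
        - slice hp ((a : ℂ) • spread hp v) q‖
      ≤ ∑ _q : G ⧸ L, ε' := Finset.sum_le_sum fun q _ => hterm q
    _ = (Fintype.card (G ⧸ L) : ℝ) * ε' := by
        rw [Finset.sum_const, Finset.card_univ, nsmul_eq_mul]

lemma mem_ann_induced (hp1 : 1 < pr) (hp : 0 < (ENNReal.ofReal pr).toReal)
    [Fact (1 ≤ conjExp (ENNReal.ofReal pr))]
    (π : OrthRep L (ENNReal.ofReal pr)) (e : ((G ⧸ L) × ℕ) ≃ ℕ) (a : ℂ)
    (v : lp (fun _ : ℕ => ℂ) (ENNReal.ofReal pr)) (hv : v ∈ π.ann) :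
    lpCongr hp e (a • spread hp v) ∈ (inducedRep π hp e).ann := by
  intro φ hφ
  have hq_pos : 0 < (conjExp (ENNReal.ofReal pr)).toReal := conjExp_toReal_pos hp1
  have hψmem : Memℓp ((fun x => φ (e x)) : (G ⧸ L) × ℕ → ℂ) (conjExp (ENNReal.ofReal pr)) :=
    memℓp_comp_equiv hq_pos e hφ.1
  have hXapp : ∀ x : (G ⧸ L) × ℕ,
      ((a • spread hp v : lp (fun _ : (G ⧸ L) × ℕ => ℂ) (ENNReal.ofReal pr)) :
        (G ⧸ L) × ℕ → ℂ) x = a * v x.2 := by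
    intro x
    simp only [lp.coeFn_smul, Pi.smul_apply, spread_apply, smul_eq_mul]
  have hinvq : ∀ q : G ⧸ L, dualPair (fun m => φ (e (q, m))) ((v : ℕ → ℂ)) = 0 := by
    intro q
    apply hv
    refine ⟨sliceMem hq_pos hψmem q, ?_⟩
    intro l w
    have hkey := hφ.2 (Quotient.out q * (l : G) * (Quotient.out q)⁻¹)
      (lpCongr hp e (psingle hp q w))
    rw [inducedRep_apply, LinearIsometryEquiv.symm_apply_apply,
      indFun_psingle, dualPair_lpCongr, dualPair_lpCongr,
      dualPair_psingle, dualPair_psingle] at hkey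
    exact hkey
  show dualPair φ (lpCongr hp e (a • spread hp v) : ℕ → ℂ) = 0
  rw [dualPair_lpCongr]
  have hcoe : ((a • spread hp v : lp (fun _ : (G ⧸ L) × ℕ => ℂ) (ENNReal.ofReal pr)) :
      (G ⧸ L) × ℕ → ℂ) = fun x => a * v x.2 := funext hXapp
  rw [dualPair, hcoe]
  have hs2 : ∀ q : G ⧸ L, Summable fun m => φ (e (q, m)) * (a * v m) := by
    intro q
    have hs := (summable_mul_of_memℓp hp1 (sliceMem hq_pos hψmem q) v).mul_left a
    refine hs.congr fun m => ?_
    show a * ((fun m => φ (e (q, m))) m * v m) = _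
    ring
  have h0q : ∀ q : G ⧸ L, ∑' m, φ (e (q, m)) * (a * v m) = 0 := by
    intro q
    have hrw : (fun m => φ (e (q, m)) * (a * v m)) = fun m => a * (φ (e (q, m)) * v m) := by
      funext m; ring
    rw [hrw, tsum_mul_left]
    have h00 : ∑' m, φ (e (q, m)) * v m = 0 := hinvq q
    rw [h00, mul_zero]
  exact tsum_slices_zero hs2 h0q

end Main
end TlpAux


/-- An open finite-index subgroup of a second countable locally compact
group with Property `(T_{ℓ_p})` (`1 < p < ∞`, `p ≠ 2`) has Property `(T_{ℓ_p})`. -/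
theorem propertyTlp_of_finiteIndex_subgroup
    (G : Type*) [Group G] [TopologicalSpace G] [IsTopologicalGroup G]
    [LocallyCompactSpace G] [SecondCountableTopology G] [T2Space G]
    (p : ℝ) (hp1 : 1 < p) (hp2 : p ≠ 2) (hT : HasPropertyTlp G p)
    (L : Subgroup G) (hopen : IsOpen (L : Set G)) (hfin : L.FiniteIndex) :
    HasPropertyTlp L p := by
  intro _inst π hA
  haveI : Fintype (G ⧸ L) := Fintype.ofFinite _
  haveI : DecidableEq (G ⧸ L) := Classical.decEq _
  haveI : DiscreteTopology (G ⧸ L) := QuotientGroup.discreteTopology hopen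
  haveI : Fact (1 ≤ conjExp (ENNReal.ofReal p)) := ⟨by
    rw [TlpAux.conjExp_ofReal hp1]
    apply ENNReal.one_le_ofReal.2
    rw [le_div_iff₀ (by linarith : (0:ℝ) < p - 1)]
    linarith⟩
  have hp0 : (0:ℝ) < p := lt_trans one_pos hp1
  have hp : 0 < (ENNReal.ofReal p).toReal := by
    rw [ENNReal.toReal_ofReal hp0.le]; exact hp0
  obtain ⟨e⟩ : Nonempty (((G ⧸ L) × ℕ) ≃ ℕ) := nonempty_equiv_of_countable
  obtain ⟨f, hfann, hfnorm, hfinv⟩ := hA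
  have hk1 : (1:ℝ) ≤ (Fintype.card (G ⧸ L) : ℝ) := by
    have : 0 < Fintype.card (G ⧸ L) := Fintype.card_pos
    exact_mod_cast this
  have hk0 : (0:ℝ) < (Fintype.card (G ⧸ L) : ℝ) := lt_of_lt_of_le one_pos hk1
  have ha0 : (0:ℝ) < (Fintype.card (G ⧸ L) : ℝ) ^ (-(1/p)) := Real.rpow_pos_of_pos hk0 _
  have ha1 : ((Fintype.card (G ⧸ L) : ℝ) ^ (-(1/p)) : ℝ) ≤ 1 :=
    Real.rpow_le_one_of_one_le_of_nonpos hk1 (neg_nonpos.2 (by positivity))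
  refine hT (TlpAux.inducedRep π hp e)
    ⟨fun n => TlpAux.lpCongr hp e
      ((((Fintype.card (G ⧸ L) : ℝ) ^ (-(1/p)) : ℝ) : ℂ) • TlpAux.spread hp (f n)),
      fun n => TlpAux.mem_ann_induced hp1 hp π e _ (f n) (hfann n),
      fun n => TlpAux.norm_induced_vec hp1 hp e (f n) (hfnorm n), ?_⟩
  intro Qc hQc ε hε
  have hε' : 0 < ε / ((Fintype.card (G ⧸ L) : ℝ) + 1) := by positivity
  have hKcomp : IsCompact (⋃ q : G ⧸ L, (fun g => TlpAux.coc L g q) '' Qc) :=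
    isCompact_iUnion fun q => hQc.image (TlpAux.continuous_coc L q)
  obtain ⟨N, hN⟩ := hfinv _ hKcomp _ hε'
  refine ⟨N, fun n hn g hg => ?_⟩
  have hb : ∀ q : G ⧸ L, ‖π.toFun (TlpAux.coc L g q) (f n) - f n‖
      ≤ ε / ((Fintype.card (G ⧸ L) : ℝ) + 1) :=
    fun q => (hN n hn (TlpAux.coc L g q)
      (Set.mem_iUnion.2 ⟨q, Set.mem_image_of_mem _ hg⟩)).le
  refine lt_of_le_of_lt (TlpAux.induced_diff_bound hp π e g ha0 ha1 (f n) hb) ?_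
  rw [← mul_div_assoc, div_lt_iff₀ (by positivity : (0:ℝ) < (Fintype.card (G ⧸ L) : ℝ) + 1)]
  nlinarith [hε, hk0]


end
end

section
/- Let G̃ be a second countable locally compact group and let G be an open subgroup of G̃ of finite index. If G has Property (T_{ℓ_p}) for some real number p with 1 < p < ∞ and p ≠ 2, then G̃ has Property (T_{ℓ_p}). -/
open scoped ENNReal Pointwise
open Filter MeasureTheory

noncomputable section

section AuxLemmas

variable {p q : ℝ}

lemma fact_one_le_ofReal (hp : 1 < p) : Fact (1 ≤ ENNReal.ofReal p) :=
  ⟨by rw [← ENNReal.ofReal_one]; exact ENNReal.ofReal_le_ofReal hp.le⟩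

lemma conjExp_ofReal (hpq : p.HolderConjugate q) :
    conjExp (ENNReal.ofReal p) = ENNReal.ofReal q := by
  unfold conjExp
  rw [← ENNReal.ofReal_inv_of_pos hpq.pos, ← ENNReal.ofReal_one,
    ← ENNReal.ofReal_sub _ (inv_nonneg.2 hpq.nonneg), hpq.one_sub_inv,
    ENNReal.ofReal_inv_of_pos hpq.symm.pos, inv_inv]

-- Hölder: summability of the pairing
lemma holder_summable (hpq : p.HolderConjugate q) {φ : ℕ → ℂ}
    (hφ : Summable fun x => ‖φ x‖ ^ q)
    (f : lp (fun _ : ℕ => ℂ) (ENNReal.ofReal p)) :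
    Summable fun x => φ x * f x := by
  have hf : Summable fun x => ‖f x‖ ^ p := by
    have := (lp.memℓp f).summable
      (by rw [ENNReal.toReal_ofReal hpq.nonneg]; exact hpq.pos)
    rwa [ENNReal.toReal_ofReal hpq.nonneg] at this
  have h := (Real.summable_and_inner_le_Lp_mul_Lq_tsum_of_nonneg hpq
    (fun x => norm_nonneg (f x)) (fun x => norm_nonneg (φ x)) hf hφ).1
  refine Summable.of_norm ?_
  simpa [norm_mul, mul_comm] using h

lemma holder_bound (hpq : p.HolderConjugate q) {φ : ℕ → ℂ}
    (hφ : Summable fun x => ‖φ x‖ ^ q)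
    (f : lp (fun _ : ℕ => ℂ) (ENNReal.ofReal p)) :
    ‖dualPair φ f‖ ≤ (∑' x, ‖φ x‖ ^ q) ^ (1 / q) * ‖f‖ := by
  have hf : Summable fun x => ‖f x‖ ^ p := by
    have := (lp.memℓp f).summable
      (by rw [ENNReal.toReal_ofReal hpq.nonneg]; exact hpq.pos)
    rwa [ENNReal.toReal_ofReal hpq.nonneg] at this
  obtain ⟨hs, hb⟩ := Real.summable_and_inner_le_Lp_mul_Lq_tsum_of_nonneg hpq
    (fun x => norm_nonneg (f x)) (fun x => norm_nonneg (φ x)) hf hφ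
  have hnorm : ‖f‖ = (∑' x, ‖f x‖ ^ p) ^ (1 / p) := by
    have := lp.norm_eq_tsum_rpow
      (by rw [ENNReal.toReal_ofReal hpq.nonneg]; exact hpq.pos) f
    rwa [ENNReal.toReal_ofReal hpq.nonneg] at this
  calc ‖dualPair φ f‖ ≤ ∑' x, ‖φ x * f x‖ := by
        refine norm_tsum_le_tsum_norm ?_
        simpa [norm_mul, mul_comm] using hs
    _ = ∑' x, ‖f x‖ * ‖φ x‖ := by simp [norm_mul, mul_comm]
    _ ≤ (∑' x, ‖f x‖ ^ p) ^ (1 / p) * (∑' x, ‖φ x‖ ^ q) ^ (1 / q) := hb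
    _ = (∑' x, ‖φ x‖ ^ q) ^ (1 / q) * ‖f‖ := by rw [hnorm]; ring

/-- The continuous linear functional on `ℓ_p` induced by `φ ∈ ℓ_q`. -/
lemma exists_dualCLM [Fact (1 ≤ ENNReal.ofReal p)] (hpq : p.HolderConjugate q) {φ : ℕ → ℂ}
    (hφ : Summable fun x => ‖φ x‖ ^ q) :
    ∃ L : lp (fun _ : ℕ => ℂ) (ENNReal.ofReal p) →L[ℂ] ℂ,
      ∀ f : lp (fun _ : ℕ => ℂ) (ENNReal.ofReal p), L f = dualPair φ f := by
  have hadd : ∀ f g : lp (fun _ : ℕ => ℂ) (ENNReal.ofReal p),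
      dualPair φ ↑(f + g) = dualPair φ ↑f + dualPair φ ↑g := by
    intro f g
    have h1 := holder_summable hpq hφ f
    have h2 := holder_summable hpq hφ g
    simp only [dualPair]
    rw [← Summable.tsum_add h1 h2]
    congr 1
    ext x
    have : (↑(f + g) : ℕ → ℂ) x = f x + g x := by rw [lp.coeFn_add]; rfl
    rw [this]; ring
  have hsmul : ∀ (c : ℂ) (f : lp (fun _ : ℕ => ℂ) (ENNReal.ofReal p)),
      dualPair φ ↑(c • f) = c * dualPair φ ↑f := by
    intro c f
    simp only [dualPair]
    rw [← tsum_mul_left]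
    congr 1
    ext x
    have : (↑(c • f) : ℕ → ℂ) x = c * f x := by rw [lp.coeFn_smul]; rfl
    rw [this]; ring
  exact ⟨LinearMap.mkContinuous
    { toFun := fun f : lp (fun _ : ℕ => ℂ) (ENNReal.ofReal p) => dualPair φ ↑f
      map_add' := hadd
      map_smul' := hsmul } ((∑' x, ‖φ x‖ ^ q) ^ (1 / q)) (holder_bound hpq hφ),
    fun f => rfl⟩

/-- Duality `(ℓ_p)* = ℓ_q`: every continuous linear functional on `ℓ_p` is represented by
a sequence in `ℓ_q`. -/
lemma exists_dual_rep [Fact (1 ≤ ENNReal.ofReal p)] (hpq : p.HolderConjugate q)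
    (ξ : lp (fun _ : ℕ => ℂ) (ENNReal.ofReal p) →L[ℂ] ℂ) :
    ∃ φ : ℕ → ℂ, (Summable fun x => ‖φ x‖ ^ q) ∧
      ∀ f : lp (fun _ : ℕ => ℂ) (ENNReal.ofReal p), ξ f = dualPair φ f := by
  set P := ENNReal.ofReal p with hP
  have hPtop : P ≠ ⊤ := ENNReal.ofReal_ne_top
  have hPt : P.toReal = p := ENNReal.toReal_ofReal hpq.nonneg
  have hp0 : 0 < P.toReal := by rw [hPt]; exact hpq.pos
  set φ : ℕ → ℂ := fun x => ξ (lp.single P x 1) with hφdef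
  have hsingle : ∀ (x : ℕ) (v : ℂ), ξ (lp.single P x v) = v * φ x := by
    intro x v
    have h1 : (lp.single P x v : lp (fun _ : ℕ => ℂ) P) = v • lp.single P x (1 : ℂ) := by
      have h2 := lp.single_smul (E := fun _ : ℕ => ℂ) P x v (1 : ℂ)
      rw [smul_eq_mul, mul_one] at h2
      exact h2
    rw [h1, ξ.map_smul, smul_eq_mul]
  have hrep : ∀ f : lp (fun _ : ℕ => ℂ) P, HasSum (fun x => φ x * f x) (ξ f) := by
    intro f
    have h1 : HasSum (fun x => lp.single P x (f x)) f := lp.hasSum_single hPtop f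
    have h2 := h1.mapL ξ
    have h3 : (fun x => φ x * f x) = fun x => ξ (lp.single P x (f x)) := by
      funext x; rw [hsingle, mul_comm]
    rw [h3]
    exact h2
  refine ⟨φ, ?_, fun f => ((hrep f).tsum_eq).symm⟩
  -- summability of `‖φ‖ ^ q`
  set c : ℕ → ℂ := fun x =>
    ((‖φ x‖ ^ (q - 1) : ℝ) : ℂ) * (starRingEnd ℂ) (φ x) / ((‖φ x‖ : ℝ) : ℂ) with hcdef
  have hq1 : (0 : ℝ) < q - 1 := sub_pos.2 hpq.symm.lt
  have hc_mul : ∀ x, φ x * c x = ((‖φ x‖ ^ q : ℝ) : ℂ) := by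
    intro x
    by_cases h : φ x = 0
    · simp [hcdef, h, Real.zero_rpow hpq.symm.ne_zero]
    · have hn : (0 : ℝ) < ‖φ x‖ := norm_pos_iff.2 h
      have hmc : φ x * (starRingEnd ℂ) (φ x) = ((‖φ x‖ ^ 2 : ℝ) : ℂ) := by
        rw [Complex.mul_conj]
        norm_cast
        rw [Complex.normSq_eq_norm_sq]
      have hmul : ‖φ x‖ ^ (q - 1) * ‖φ x‖ = ‖φ x‖ ^ q := by
        rw [← Real.rpow_add_one hn.ne' (q - 1), sub_add_cancel]
      have hreal : ‖φ x‖ ^ (q - 1) * ‖φ x‖ ^ 2 / ‖φ x‖ = ‖φ x‖ ^ q := by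
        rw [sq, ← mul_assoc, mul_div_cancel_right₀ _ hn.ne', hmul]
      rw [hcdef]
      simp only []
      rw [mul_div_assoc', mul_left_comm, hmc, ← Complex.ofReal_mul, ← Complex.ofReal_div, hreal]
  have hc_norm : ∀ x, ‖c x‖ = ‖φ x‖ ^ (q - 1) := by
    intro x
    by_cases h : φ x = 0
    · simp [hcdef, h, Real.zero_rpow hq1.ne']
    · have hn : (0 : ℝ) < ‖φ x‖ := norm_pos_iff.2 h
      rw [hcdef]
      simp only [norm_div, norm_mul, Complex.norm_real, RCLike.norm_conj, Real.norm_eq_abs,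
        abs_of_nonneg (Real.rpow_nonneg (norm_nonneg _) _), abs_of_nonneg (norm_nonneg (φ x))]
      rw [mul_div_cancel_right₀ _ (by simpa using hn.ne')]
  have key : ∀ s : Finset ℕ, ∑ x ∈ s, ‖φ x‖ ^ q ≤ ‖ξ‖ ^ q := by
    intro s
    set A := ∑ x ∈ s, ‖φ x‖ ^ q with hA
    have hA0 : 0 ≤ A := Finset.sum_nonneg fun x _ => Real.rpow_nonneg (norm_nonneg _) _
    rcases hA0.eq_or_lt with h0 | hApos
    · rw [← h0]
      positivity
    have hqp : (q - 1) * p = q := by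
      have := hpq.symm.sub_one_mul_conj
      linarith
    have hF : ξ (∑ x ∈ s, lp.single P x (c x)) = (A : ℂ) := by
      rw [map_sum]
      rw [hA, Complex.ofReal_sum]
      refine Finset.sum_congr rfl fun x _ => ?_
      rw [hsingle, mul_comm, hc_mul]
    have hFn : ‖∑ x ∈ s, lp.single P x (c x)‖ = A ^ (1 / p) := by
      have h1 := lp.norm_sum_single hp0 c s
      rw [hPt] at h1
      have h2 : ∑ x ∈ s, ‖c x‖ ^ p = A := by
        rw [hA]
        refine Finset.sum_congr rfl fun x _ => ?_
        rw [hc_norm, ← Real.rpow_mul (norm_nonneg _), hqp]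
      have h3 : (‖∑ x ∈ s, lp.single P x (c x)‖ ^ p) ^ p⁻¹
          = ‖∑ x ∈ s, lp.single P x (c x)‖ :=
        Real.rpow_rpow_inv (norm_nonneg _) hpq.ne_zero
      rw [← h3, h1, h2, one_div]
    have hle : A ≤ ‖ξ‖ * A ^ (1 / p) := by
      calc A = ‖(A : ℂ)‖ := by rw [Complex.norm_real, Real.norm_eq_abs, abs_of_nonneg hA0]
        _ = ‖ξ (∑ x ∈ s, lp.single P x (c x))‖ := by rw [hF]
        _ ≤ ‖ξ‖ * ‖∑ x ∈ s, lp.single P x (c x)‖ := ξ.le_opNorm _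
        _ = ‖ξ‖ * A ^ (1 / p) := by rw [hFn]
    have h1q : A ^ (1 / q) ≤ ‖ξ‖ := by
      have hApow : (0 : ℝ) < A ^ (1 / p) := Real.rpow_pos_of_pos hApos _
      have hsub : (1 / q : ℝ) = 1 - 1 / p := by
        have := hpq.inv_add_inv_eq_one
        rw [one_div, one_div]
        linarith
      rw [hsub, Real.rpow_sub hApos, Real.rpow_one, div_le_iff₀ hApow]
      exact hle
    calc A = (A ^ (1 / q)) ^ q := by
          rw [← Real.rpow_mul hA0, one_div, inv_mul_cancel₀ hpq.symm.ne_zero, Real.rpow_one]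
      _ ≤ ‖ξ‖ ^ q := Real.rpow_le_rpow (Real.rpow_nonneg hA0 _) h1q hpq.symm.nonneg
  exact summable_of_sum_le (fun x => Real.rpow_nonneg (norm_nonneg _) _) key

/-- Quantitative Hahn-Banach: a functional of norm at most `1` vanishing on a closed
subspace `W` and taking value `infDist f₀ W` at `f₀`. -/
lemma exists_dual_of_infDist {E : Type*} [NormedAddCommGroup E] [NormedSpace ℂ E]
    (W : Submodule ℂ E) (hW : IsClosed (W : Set E)) (f₀ : E)
    (hd : 0 < Metric.infDist f₀ (W : Set E)) :
    ∃ ξ : E →L[ℂ] ℂ, ‖ξ‖ ≤ 1 ∧ (∀ w ∈ W, ξ w = 0) ∧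
      ξ f₀ = (Metric.infDist f₀ (W : Set E) : ℂ) := by
  haveI : IsClosed (W : Set E) := hW
  set mkC : E →L[ℂ] E ⧸ W := LinearMap.mkContinuous W.mkQ 1
    (fun x => by simpa using Submodule.Quotient.norm_mk_le W x) with hmkC
  have hnorm_mk : ∀ x : E, ‖(Submodule.Quotient.mk x : E ⧸ W)‖
      = Metric.infDist x (W : Set E) := by
    intro x
    exact QuotientAddGroup.norm_mk (S := W.toAddSubgroup) x
  have hne : (Submodule.Quotient.mk f₀ : E ⧸ W) ≠ 0 := by
    intro h0
    rw [← hnorm_mk f₀] at hd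
    rw [h0] at hd
    simp at hd
  obtain ⟨g, hg1, hg2⟩ := exists_dual_vector ℂ (Submodule.Quotient.mk f₀ : E ⧸ W) (norm_ne_zero_iff.2 hne)
  refine ⟨g.comp mkC, ?_, ?_, ?_⟩
  · calc ‖g.comp mkC‖ ≤ ‖g‖ * ‖mkC‖ := g.opNorm_comp_le mkC
      _ ≤ 1 * 1 := by
          rw [hg1]
          refine mul_le_mul_of_nonneg_left ?_ zero_le_one
          exact LinearMap.mkContinuous_norm_le _ zero_le_one _
      _ = 1 := one_mul 1
  · intro w hw
    have : (mkC w : E ⧸ W) = 0 := by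
      simp only [hmkC, LinearMap.mkContinuous_apply, Submodule.mkQ_apply]
      exact (Submodule.Quotient.mk_eq_zero W).2 hw
    simp [ContinuousLinearMap.comp_apply, this]
  · have : mkC f₀ = (Submodule.Quotient.mk f₀ : E ⧸ W) := rfl
    rw [ContinuousLinearMap.comp_apply, this, hg2, hnorm_mk]
    norm_cast

end AuxLemmas

set_option maxHeartbeats 2000000 in
/-- If an open finite-index subgroup `G` of a second countable locally
compact group `G̃` has Property `(T_{ℓ_p})` (`1 < p < ∞`, `p ≠ 2`), then so does `G̃`. -/
theorem propertyTlp_of_finiteIndex_overgroup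
    (G' : Type*) [Group G'] [TopologicalSpace G'] [IsTopologicalGroup G']
    [LocallyCompactSpace G'] [SecondCountableTopology G'] [T2Space G']
    (G : Subgroup G') (hopen : IsOpen (G : Set G')) (hfin : G.FiniteIndex)
    (p : ℝ) (hp1 : 1 < p) (hp2 : p ≠ 2) (hT : HasPropertyTlp G p) :
    HasPropertyTlp G' p := by
  intro _inst π hseq
  set q : ℝ := p / (p - 1) with hqdef
  have hpq : p.HolderConjugate q := Real.HolderConjugate.conjExponent hp1
  obtain ⟨f, hmem, hnorm, hai⟩ := hseq
  -- the restricted representation of `G`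
  set ρ : OrthRep G (ENNReal.ofReal p) :=
    { toFun := π.toFun.comp G.subtype
      continuous_apply := fun v => (π.continuous_apply v).comp continuous_subtype_val }
    with hρdef
  -- the closed subspace generated by `π(h) u - u`, `h ∈ G`
  set Sgen : Set (lp (fun _ : ℕ => ℂ) (ENNReal.ofReal p)) :=
    {v | ∃ (h : G) (u : lp (fun _ : ℕ => ℂ) (ENNReal.ofReal p)), v = π.toFun ↑h u - u}
    with hSdef
  set W : Submodule ℂ (lp (fun _ : ℕ => ℂ) (ENNReal.ofReal p)) :=
    (Submodule.span ℂ Sgen).topologicalClosure with hWdef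
  have hWclosed : IsClosed (W : Set (lp (fun _ : ℕ => ℂ) (ENNReal.ofReal p))) :=
    Submodule.isClosed_topologicalClosure _
  have hWann : ∀ v ∈ W, v ∈ ρ.ann := by
    intro v hv φ hφ
    obtain ⟨hφmem, hφinv⟩ := hφ
    have hφsum : Summable fun x => ‖φ x‖ ^ q := by
      rw [conjExp_ofReal hpq] at hφmem
      have := hφmem.summable
        (by rw [ENNReal.toReal_ofReal hpq.symm.nonneg]; exact hpq.symm.pos)
      rwa [ENNReal.toReal_ofReal hpq.symm.nonneg] at this
    obtain ⟨L, hL⟩ := exists_dualCLM hpq hφsum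
    have hspan : Submodule.span ℂ Sgen ≤ LinearMap.ker (L : _ →ₗ[ℂ] ℂ) := by
      rw [Submodule.span_le]
      rintro _ ⟨h, u, rfl⟩
      have hLval : L (π.toFun ↑h u - u) = 0 := by
        rw [map_sub, hL, hL]
        have h2 := hφinv h u
        exact sub_eq_zero.2 h2
      exact hLval
    have hWker := Submodule.topologicalClosure_minimal _ hspan (ContinuousLinearMap.isClosed_ker L)
    have := hWker hv
    rw [LinearMap.mem_ker] at this
    rw [← hL]
    exact this
  by_cases hcase : ∀ δ : ℝ, 0 < δ → ∀ N : ℕ, ∃ n, N ≤ n ∧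
      Metric.infDist (f n) (W : Set (lp (fun _ : ℕ => ℂ) (ENNReal.ofReal p))) < δ
  · -- CASE A : construct an almost invariant sequence in `ρ.ann`, contradict `hT`
    have hsel : ∀ m : ℕ, ∃ n, m ≤ n ∧ ∃ w, w ∈ W ∧ ‖f n - w‖ < 1 / ((m : ℝ) + 3) := by
      intro m
      obtain ⟨n, hn, hdlt⟩ := hcase (1 / ((m : ℝ) + 3)) (by positivity) m
      obtain ⟨w, hw, hwd⟩ := (Metric.infDist_lt_iff ⟨0, W.zero_mem⟩).1 hdlt
      exact ⟨n, hn, w, hw, by rwa [dist_eq_norm] at hwd⟩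
    choose n hn w hwW hwd using hsel
    have hm3 : ∀ m : ℕ, (0 : ℝ) < (m : ℝ) + 3 := fun m => by positivity
    have hwnorm : ∀ m : ℕ, (2 : ℝ) / 3 ≤ ‖w m‖ := by
      intro m
      have h1 : ‖f (n m)‖ - ‖w m‖ ≤ ‖f (n m) - w m‖ := norm_sub_norm_le _ _
      have h2 : 1 / ((m : ℝ) + 3) ≤ 1 / 3 := by
        apply one_div_le_one_div_of_le
        · norm_num
        · have : (0:ℝ) ≤ (m:ℝ) := Nat.cast_nonneg m
          linarith
      have h3 := hwd m
      rw [hnorm (n m)] at h1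
      linarith
    have hwpos : ∀ m, (0 : ℝ) < ‖w m‖ := fun m => lt_of_lt_of_le (by norm_num) (hwnorm m)
    set h : ℕ → lp (fun _ : ℕ => ℂ) (ENNReal.ofReal p) :=
      fun m => (((‖w m‖ : ℝ) : ℂ))⁻¹ • w m with hhdef
    have hh1 : ∀ m, ‖h m‖ = 1 := by
      intro m
      rw [hhdef]
      simp only [norm_smul, norm_inv, Complex.norm_real, Real.norm_eq_abs,
        abs_of_nonneg (norm_nonneg _)]
      exact inv_mul_cancel₀ (hwpos m).ne'
    have hhW : ∀ m, h m ∈ ρ.ann := fun m => hWann _ (W.smul_mem _ (hwW m))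
    have hhf : ∀ m, ‖h m - f (n m)‖ ≤ 2 / ((m : ℝ) + 3) := by
      intro m
      have e1 : h m - w m = ((((‖w m‖ : ℝ) : ℂ))⁻¹ - 1) • w m := by
        rw [hhdef, sub_smul, one_smul]
      have e2 : ‖h m - w m‖ = |1 - ‖w m‖| := by
        rw [e1, norm_smul]
        have e21 : ‖((((‖w m‖ : ℝ) : ℂ))⁻¹ - 1)‖ = |‖w m‖⁻¹ - 1| := by
          rw [show ((((‖w m‖ : ℝ) : ℂ))⁻¹ - 1) = (((‖w m‖⁻¹ - 1 : ℝ)) : ℂ) by push_cast; ring,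
            Complex.norm_real, Real.norm_eq_abs]
        rw [e21]
        rw [show |‖w m‖⁻¹ - 1| * ‖w m‖ = |(‖w m‖⁻¹ - 1) * ‖w m‖| by
          rw [abs_mul, abs_of_nonneg (norm_nonneg _)]]
        congr 1
        rw [sub_mul, inv_mul_cancel₀ (hwpos m).ne', one_mul]
      have e3 : |1 - ‖w m‖| ≤ ‖f (n m) - w m‖ := by
        have := abs_norm_sub_norm_le (f (n m)) (w m)
        rw [hnorm (n m)] at this
        exact this
      calc ‖h m - f (n m)‖ ≤ ‖h m - w m‖ + ‖w m - f (n m)‖ := norm_sub_le_norm_sub_add_norm_sub _ _ _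
        _ ≤ ‖f (n m) - w m‖ + ‖f (n m) - w m‖ := by
            rw [norm_sub_rev (w m)]
            exact add_le_add (e2 ▸ e3) le_rfl
        _ ≤ 2 / ((m : ℝ) + 3) := by
            have h4 := hwd m
            have h5 : 2 / ((m : ℝ) + 3) = 1 / ((m : ℝ) + 3) + 1 / ((m : ℝ) + 3) := by ring
            linarith
    refine hT ρ ⟨h, hhW, hh1, ?_⟩
    intro Q hQ ε hε
    obtain ⟨N₁, hN₁⟩ := hai (Subtype.val '' Q) (hQ.image continuous_subtype_val) (ε / 2)
      (by positivity)
    obtain ⟨M, hM⟩ := exists_nat_gt (8 / ε)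
    refine ⟨max N₁ M, fun m hm g hg => ?_⟩
    have hmN₁ : N₁ ≤ n m := le_trans (le_trans (le_max_left _ _) hm) (hn m)
    have hπ := hN₁ (n m) hmN₁ ↑g ⟨g, hg, rfl⟩
    have hb : 4 / ((m : ℝ) + 3) < ε / 2 := by
      have hMm : (M : ℝ) ≤ m := Nat.cast_le.2 (le_trans (le_max_right _ _) hm)
      have h8 : 8 / ε < (m : ℝ) + 3 := by linarith
      rw [div_lt_iff₀ (hm3 m)]
      rw [div_lt_iff₀ hε] at h8
      nlinarith
    have hiso : ‖ρ.toFun g (h m) - ρ.toFun g (f (n m))‖ = ‖h m - f (n m)‖ := by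
      rw [← map_sub]
      exact (π.toFun ↑g).norm_map _
    calc ‖ρ.toFun g (h m) - h m‖
        ≤ ‖ρ.toFun g (h m) - ρ.toFun g (f (n m))‖ + ‖ρ.toFun g (f (n m)) - h m‖ :=
          norm_sub_le_norm_sub_add_norm_sub _ _ _
      _ ≤ ‖h m - f (n m)‖ + (‖ρ.toFun g (f (n m)) - f (n m)‖ + ‖f (n m) - h m‖) := by
          rw [hiso]
          exact add_le_add le_rfl (norm_sub_le_norm_sub_add_norm_sub _ _ _)
      _ ≤ 2 / ((m : ℝ) + 3) + (ε / 2 + 2 / ((m : ℝ) + 3)) := by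
          have h1 := hhf m
          have h2 : ‖f (n m) - h m‖ ≤ 2 / ((m : ℝ) + 3) := by rw [norm_sub_rev]; exact h1
          have h3 : ‖ρ.toFun g (f (n m)) - f (n m)‖ < ε / 2 := hπ
          exact add_le_add h1 (add_le_add h3.le h2)
      _ < ε := by
          have h9 : 2 / ((m : ℝ) + 3) + 2 / ((m : ℝ) + 3) = 4 / ((m : ℝ) + 3) := by ring
          linarith
  · -- CASE B
    push_neg at hcase
    obtain ⟨δ, hδ, N, hNd⟩ := hcase
    haveI := hfin
    haveI : Fintype (G' ⧸ G) := Fintype.ofFinite _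
    haveI : Nonempty (G' ⧸ G) := ⟨QuotientGroup.mk 1⟩
    set t : G' ⧸ G → G' := fun c => (Quotient.out c)⁻¹ with htdef
    have hQ₀ : IsCompact (Set.range t) := (Set.finite_range t).isCompact
    obtain ⟨N₁, hN₁⟩ := hai (Set.range t) hQ₀ (δ / 2) (by positivity)
    set n := max N N₁ with hndef
    have hd : δ ≤ Metric.infDist (f n) (W : Set (lp (fun _ : ℕ => ℂ) (ENNReal.ofReal p))) :=
      hNd n (le_max_left _ _)
    obtain ⟨ξ, hξnorm, hξ0, hξval⟩ :=
      exists_dual_of_infDist W hWclosed (f n) (lt_of_lt_of_le hδ hd)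
    set d := Metric.infDist (f n) (W : Set (lp (fun _ : ℕ => ℂ) (ENNReal.ofReal p))) with hddef
    have hdpos : 0 < d := lt_of_lt_of_le hδ hd
    have hξG : ∀ (h : G) (v : lp (fun _ : ℕ => ℂ) (ENNReal.ofReal p)),
        ξ (π.toFun ↑h v) = ξ v := by
      intro h v
      have hvmem : π.toFun ↑h v - v ∈ W :=
        Submodule.le_topologicalClosure _ (Submodule.subset_span ⟨h, v, rfl⟩)
      have h0 := hξ0 _ hvmem
      rw [map_sub, sub_eq_zero] at h0
      exact h0
    set ψ : lp (fun _ : ℕ => ℂ) (ENNReal.ofReal p) →L[ℂ] ℂ :=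
      ∑ c : G' ⧸ G, ξ.comp ((π.toFun (t c)).toLinearIsometry.toContinuousLinearMap) with hψdef
    have hψapp : ∀ v, ψ v = ∑ c : G' ⧸ G, ξ (π.toFun (t c) v) := by
      intro v
      rw [hψdef, ContinuousLinearMap.sum_apply]
      rfl
    have hψinv : ∀ (g : G') (v), ψ (π.toFun g v) = ψ v := by
      intro g v
      rw [hψapp, hψapp]
      have key : ∀ c : G' ⧸ G,
          ξ (π.toFun (t c) (π.toFun g v)) = ξ (π.toFun (t (g⁻¹ • c)) v) := by
        intro c
        have hh : (Quotient.out (g⁻¹ • c))⁻¹ * (g⁻¹ * Quotient.out c) ∈ G := by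
          rw [← QuotientGroup.eq, QuotientGroup.out_eq']
          have h2 : (QuotientGroup.mk (g⁻¹ * Quotient.out c) : G' ⧸ G) = g⁻¹ • c := by
            rw [show g⁻¹ * Quotient.out c = g⁻¹ • Quotient.out c from rfl,
              ← MulAction.Quotient.smul_mk, QuotientGroup.out_eq']
          rw [h2]
        set h₀ : G := ⟨_, hh⟩ with hh₀def
        have hrel : t c * g = (↑h₀)⁻¹ * t (g⁻¹ • c) := by
          show (Quotient.out c)⁻¹ * g
            = ((Quotient.out (g⁻¹ • c))⁻¹ * (g⁻¹ * Quotient.out c))⁻¹ * (Quotient.out (g⁻¹ • c))⁻¹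
          group
        have e1 : π.toFun (t c * g) v = π.toFun (t c) (π.toFun g v) := by
          rw [map_mul]; rfl
        have e2 : π.toFun ((↑h₀)⁻¹ * t (g⁻¹ • c)) v
            = π.toFun ((h₀⁻¹ : G) : G') (π.toFun (t (g⁻¹ • c)) v) := by
          rw [map_mul]; rfl
        rw [← e1, hrel, e2, hξG]
      rw [Finset.sum_congr rfl fun c _ => key c]
      simpa using Equiv.sum_comp (MulAction.toPerm g⁻¹) (fun cc => ξ (π.toFun (t cc) v))
    obtain ⟨φ, hφsum, hφrep⟩ := exists_dual_rep hpq ψ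
    have hDI : π.DualInvariant φ := by
      constructor
      · rw [conjExp_ofReal hpq]
        exact memℓp_gen (by rw [ENNReal.toReal_ofReal hpq.symm.nonneg]; exact hφsum)
      · intro g v
        rw [← hφrep, ← hφrep, hψinv]
    have hψ0 : ψ (f n) = 0 := by rw [hφrep]; exact hmem n φ hDI
    set k := Fintype.card (G' ⧸ G) with hkdef
    have hkpos : 0 < k := Fintype.card_pos
    have hkR : (0 : ℝ) < (k : ℝ) := Nat.cast_pos.2 hkpos
    have hterm : ∀ c : G' ⧸ G, ‖ξ (π.toFun (t c) (f n)) - ξ (f n)‖ < δ / 2 := by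
      intro c
      rw [← map_sub]
      calc ‖ξ (π.toFun (t c) (f n) - f n)‖ ≤ ‖ξ‖ * ‖π.toFun (t c) (f n) - f n‖ := ξ.le_opNorm _
        _ ≤ 1 * ‖π.toFun (t c) (f n) - f n‖ :=
            mul_le_mul_of_nonneg_right hξnorm (norm_nonneg _)
        _ = ‖π.toFun (t c) (f n) - f n‖ := one_mul _
        _ < δ / 2 := hN₁ n (le_max_right _ _) (t c) ⟨c, rfl⟩
    have hsum_eq : ∑ c : G' ⧸ G, (ξ (π.toFun (t c) (f n)) - ξ (f n)) = -((k : ℂ) * ξ (f n)) := by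
      rw [Finset.sum_sub_distrib, ← hψapp, hψ0, Finset.sum_const, Finset.card_univ, ← hkdef,
        nsmul_eq_mul]
      ring
    have hlhs : ‖∑ c : G' ⧸ G, (ξ (π.toFun (t c) (f n)) - ξ (f n))‖ = (k : ℝ) * d := by
      rw [hsum_eq, norm_neg, norm_mul, hξval]
      rw [Complex.norm_natCast, Complex.norm_real, Real.norm_eq_abs, abs_of_nonneg hdpos.le]
    have hrhs : ‖∑ c : G' ⧸ G, (ξ (π.toFun (t c) (f n)) - ξ (f n))‖ < (k : ℝ) * (δ / 2) := by
      calc ‖∑ c : G' ⧸ G, (ξ (π.toFun (t c) (f n)) - ξ (f n))‖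
          ≤ ∑ c : G' ⧸ G, ‖ξ (π.toFun (t c) (f n)) - ξ (f n)‖ := norm_sum_le _ _
        _ < ∑ _c : G' ⧸ G, (δ / 2) :=
            Finset.sum_lt_sum_of_nonempty Finset.univ_nonempty fun c _ => hterm c
        _ = (k : ℝ) * (δ / 2) := by
            rw [Finset.sum_const, Finset.card_univ, ← hkdef, nsmul_eq_mul]
    rw [hlhs] at hrhs
    nlinarith

end
end

section
/- Let G be a connected topological group and Γ a dense subgroup of G. Let H₁, …, Hₙ be finitely many subgroups of Γ such that no Hᵢ is dense in G, let a₁, …, aₙ ∈ Γ, and set X = ⋃_{i=1}^n aᵢHᵢ. Then Γ \ X is dense in G. -/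
open scoped ENNReal Pointwise
open Filter MeasureTheory

noncomputable section

/-- Let `G` be a connected topological group and `Γ` a dense subgroup.
If `H₁, …, Hₙ` are subgroups of `Γ`, none of them dense in `G`, and `X` is a finite union
of cosets `aᵢHᵢ` with `aᵢ ∈ Γ`, then `Γ \ X` is dense in `G`. -/
theorem dense_compl_of_finite_union_cosets
    (G : Type*) [Group G] [TopologicalSpace G] [IsTopologicalGroup G] [ConnectedSpace G]
    (Γ : Subgroup G) (hΓ : Dense (Γ : Set G))
    (n : ℕ) (H : Fin n → Subgroup G) (hle : ∀ i, H i ≤ Γ)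
    (hnd : ∀ i, ¬ Dense ((H i : Set G)))
    (a : Fin n → G) (ha : ∀ i, a i ∈ Γ) :
    Dense ((Γ : Set G) \ ⋃ i, a i • ((H i : Set G))) := by
  -- each closure (a i • H i) has empty interior
  have hint : ∀ i, interior (closure (a i • (H i : Set G))) = ∅ := by
    intro i
    rw [closure_smul, interior_smul]
    suffices h : interior (closure ((H i : Set G))) = ∅ by
      rw [h, Set.smul_set_empty]
    by_contra hne
    obtain ⟨x, hx⟩ := Set.nonempty_iff_ne_empty.2 hne
    have hopen : IsOpen (((H i).topologicalClosure : Set G)) := by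
      apply Subgroup.isOpen_of_mem_nhds (g := x)
      exact mem_interior_iff_mem_nhds.1 hx
    have hclopen : IsClopen (((H i).topologicalClosure : Set G)) :=
      ⟨(H i).topologicalClosure.isClosed_of_isOpen hopen, hopen⟩
    have : ((H i).topologicalClosure : Set G) = Set.univ :=
      hclopen.eq_univ ⟨1, one_mem _⟩
    exact hnd i (by rw [dense_iff_closure_eq]; exact this)
  -- the complement of the union of closures is open and dense
  have key : ∀ s : Finset (Fin n),
      Dense ((Γ : Set G) ∩ ⋂ i ∈ s, (closure (a i • (H i : Set G)))ᶜ) := by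
    intro s
    induction s using Finset.induction with
    | empty => simpa using hΓ
    | insert _ _ hx ih =>
      rename_i j s'
      have hdj : Dense (closure (a j • (H j : Set G)))ᶜ := by
        exact interior_eq_empty_iff_dense_compl.mp (hint j)
      have := (ih.inter_of_isOpen_right hdj isClosed_closure.isOpen_compl)
      refine this.mono ?_
      intro x hx
      simp only [Set.mem_inter_iff, Set.mem_iInter, Finset.mem_insert] at *
      exact ⟨hx.1.1, fun i hi => hi.elim (fun h => h ▸ hx.2) (fun h => hx.1.2 i h)⟩
  have := key Finset.univ
  refine this.mono ?_
  intro x hx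
  simp only [Set.mem_inter_iff, Set.mem_iInter, Finset.mem_univ, forall_true_left] at hx
  refine ⟨hx.1, ?_⟩
  rw [Set.mem_iUnion]
  rintro ⟨i, hi⟩
  exact hx.2 i (subset_closure hi)

end
end

section
/- Let G be a topological group, X a countable set, and 1 ≤ p < ∞ with p ≠ 2. Let π be a group homomorphism from G to the group of surjective linear isometries of the complex Banach space ℓ_p(X) such that g ↦ π(g)f is norm-continuous for every f ∈ ℓ_p(X). Then there exist an action of G on X by permutations and a map c: G × X → S¹ such that: (1) (π(g)f)(x) = c(g⁻¹, x) f(g⁻¹x) for all g ∈ G, f ∈ ℓ_p(X), x ∈ X; (2) the stabilizer in G of every point of X is an open subgroup; (3) c is continuous (X carrying the discrete topology) and satisfies the cocycle relation c(g₁g₂, x) = c(g₁, g₂x)·c(g₂, x) for all g₁, g₂ ∈ G and x ∈ X. -/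
open scoped ENNReal Pointwise
open Filter MeasureTheory

noncomputable section

namespace OrthRepAux

/-! ### Scalar (pointwise) Clarkson–Lamperti inequalities -/

private lemma mul_rpow_sub_one {q : ℝ} {z : ℝ} (hz : 0 < z) : z * z ^ (q - 1) = z ^ q := by
  rw [Real.rpow_sub hz, Real.rpow_one]
  field_simp

private lemma rpow_superadd {q : ℝ} (hq : 1 < q) {x y : ℝ} (hx : 0 < x) (hy : 0 < y) :
    x ^ q + y ^ q < (x + y) ^ q := by
  have hxy : 0 < x + y := by linarith
  have hx' : x ^ (q - 1) < (x + y) ^ (q - 1) :=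
    Real.rpow_lt_rpow hx.le (by linarith) (by linarith)
  have hy' : y ^ (q - 1) < (x + y) ^ (q - 1) :=
    Real.rpow_lt_rpow hy.le (by linarith) (by linarith)
  calc x ^ q + y ^ q = x * x ^ (q - 1) + y * y ^ (q - 1) := by
        rw [mul_rpow_sub_one hx, mul_rpow_sub_one hy]
    _ < x * (x + y) ^ (q - 1) + y * (x + y) ^ (q - 1) :=
        add_lt_add ((mul_lt_mul_iff_right₀ hx).2 hx') ((mul_lt_mul_iff_right₀ hy).2 hy')
    _ = (x + y) * (x + y) ^ (q - 1) := by ring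
    _ = (x + y) ^ q := mul_rpow_sub_one hxy

private lemma rpow_subadd {q : ℝ} (hq0 : 0 < q) (hq : q < 1) {x y : ℝ}
    (hx : 0 < x) (hy : 0 < y) : (x + y) ^ q < x ^ q + y ^ q := by
  have hxy : 0 < x + y := by linarith
  have hx' : (x + y) ^ (q - 1) < x ^ (q - 1) :=
    Real.rpow_lt_rpow_of_neg hx (by linarith) (by linarith)
  have hy' : (x + y) ^ (q - 1) < y ^ (q - 1) :=
    Real.rpow_lt_rpow_of_neg hy (by linarith) (by linarith)
  calc (x + y) ^ q = x * (x + y) ^ (q - 1) + y * (x + y) ^ (q - 1) := by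
        rw [← mul_rpow_sub_one hxy]; ring
    _ < x * x ^ (q - 1) + y * y ^ (q - 1) :=
        add_lt_add ((mul_lt_mul_iff_right₀ hx).2 hx') ((mul_lt_mul_iff_right₀ hy).2 hy')
    _ = x ^ q + y ^ q := by rw [mul_rpow_sub_one hx, mul_rpow_sub_one hy]

private lemma norm_rpow_two (z : ℂ) : ‖z‖ ^ (2 : ℝ) = ‖z‖ * ‖z‖ := by
  rw [show (2 : ℝ) = ((2 : ℕ) : ℝ) by norm_num, Real.rpow_natCast, pow_two]

private lemma norm_rpow_decomp {p : ℝ} (z : ℂ) :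
    ‖z‖ ^ p = (‖z‖ ^ (2 : ℝ)) ^ (p / 2) := by
  rw [← Real.rpow_mul (norm_nonneg z)]
  ring_nf

/-- Parallelogram law for `ℂ`, in `rpow` form. -/
private lemma para (a b : ℂ) :
    ‖a + b‖ ^ (2 : ℝ) + ‖a - b‖ ^ (2 : ℝ) = 2 * (‖a‖ ^ (2 : ℝ) + ‖b‖ ^ (2 : ℝ)) := by
  simp only [norm_rpow_two]
  have := parallelogram_law_with_norm ℂ a b
  simp only [pow_two] at this
  exact this

private lemma scalar_lt_of_lt_two {p : ℝ} (hp1 : 1 ≤ p) (hplt : p < 2) {a b : ℂ}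
    (ha : a ≠ 0) (hb : b ≠ 0) :
    ‖a + b‖ ^ p + ‖a - b‖ ^ p < 2 * (‖a‖ ^ p + ‖b‖ ^ p) := by
  set q : ℝ := p / 2 with hqdef
  have hq0 : 0 < q := by dsimp [q]; linarith
  have hq1 : q < 1 := by dsimp [q]; linarith
  set A := ‖a + b‖ ^ (2 : ℝ) with hA
  set B := ‖a - b‖ ^ (2 : ℝ) with hB
  set u := ‖a‖ ^ (2 : ℝ) with hu
  set v := ‖b‖ ^ (2 : ℝ) with hv
  have hAnn : 0 ≤ A := Real.rpow_nonneg (norm_nonneg _) _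
  have hBnn : 0 ≤ B := Real.rpow_nonneg (norm_nonneg _) _
  have hupos : 0 < u := Real.rpow_pos_of_pos (norm_pos_iff.2 ha) _
  have hvpos : 0 < v := Real.rpow_pos_of_pos (norm_pos_iff.2 hb) _
  have hpar : A + B = 2 * (u + v) := para a b
  have hconc : A ^ q + B ^ q ≤ 2 * ((1 / 2) * A + (1 / 2) * B) ^ q := by
    have h := (Real.strictConcaveOn_rpow hq0 hq1).concaveOn.2
      (Set.mem_Ici.2 hAnn) (Set.mem_Ici.2 hBnn)
      (by norm_num : (0:ℝ) ≤ 1 / 2) (by norm_num : (0:ℝ) ≤ 1 / 2) (by norm_num)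
    simp only [smul_eq_mul] at h
    linarith
  have hmid : (1 / 2 : ℝ) * A + (1 / 2) * B = u + v := by linarith
  have hsub : (u + v) ^ q < u ^ q + v ^ q := rpow_subadd hq0 hq1 hupos hvpos
  have hexp : ∀ z : ℂ, ‖z‖ ^ p = (‖z‖ ^ (2:ℝ)) ^ q := fun z => norm_rpow_decomp z
  calc ‖a + b‖ ^ p + ‖a - b‖ ^ p = A ^ q + B ^ q := by rw [hexp, hexp]
    _ ≤ 2 * ((1 / 2) * A + (1 / 2) * B) ^ q := hconc
    _ = 2 * (u + v) ^ q := by rw [hmid]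
    _ < 2 * (u ^ q + v ^ q) := by linarith
    _ = 2 * (‖a‖ ^ p + ‖b‖ ^ p) := by rw [hexp a, hexp b]

private lemma scalar_gt_of_gt_two {p : ℝ} (hpgt : 2 < p) {a b : ℂ}
    (ha : a ≠ 0) (hb : b ≠ 0) :
    2 * (‖a‖ ^ p + ‖b‖ ^ p) < ‖a + b‖ ^ p + ‖a - b‖ ^ p := by
  set q : ℝ := p / 2 with hqdef
  have hq1 : 1 < q := by dsimp [q]; linarith
  set A := ‖a + b‖ ^ (2 : ℝ) with hA
  set B := ‖a - b‖ ^ (2 : ℝ) with hB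
  set u := ‖a‖ ^ (2 : ℝ) with hu
  set v := ‖b‖ ^ (2 : ℝ) with hv
  have hAnn : 0 ≤ A := Real.rpow_nonneg (norm_nonneg _) _
  have hBnn : 0 ≤ B := Real.rpow_nonneg (norm_nonneg _) _
  have hupos : 0 < u := Real.rpow_pos_of_pos (norm_pos_iff.2 ha) _
  have hvpos : 0 < v := Real.rpow_pos_of_pos (norm_pos_iff.2 hb) _
  have hpar : A + B = 2 * (u + v) := para a b
  have hconv : 2 * ((1 / 2) * A + (1 / 2) * B) ^ q ≤ A ^ q + B ^ q := by
    have h := (strictConvexOn_rpow hq1).convexOn.2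
      (Set.mem_Ici.2 hAnn) (Set.mem_Ici.2 hBnn)
      (by norm_num : (0:ℝ) ≤ 1 / 2) (by norm_num : (0:ℝ) ≤ 1 / 2) (by norm_num)
    simp only [smul_eq_mul] at h
    linarith
  have hmid : (1 / 2 : ℝ) * A + (1 / 2) * B = u + v := by linarith
  have hsup : u ^ q + v ^ q < (u + v) ^ q := rpow_superadd hq1 hupos hvpos
  have hexp : ∀ z : ℂ, ‖z‖ ^ p = (‖z‖ ^ (2:ℝ)) ^ q := fun z => norm_rpow_decomp z
  calc 2 * (‖a‖ ^ p + ‖b‖ ^ p) = 2 * (u ^ q + v ^ q) := by rw [hexp a, hexp b]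
    _ < 2 * (u + v) ^ q := by linarith
    _ = 2 * ((1 / 2) * A + (1 / 2) * B) ^ q := by rw [hmid]
    _ ≤ A ^ q + B ^ q := hconv
    _ = ‖a + b‖ ^ p + ‖a - b‖ ^ p := by rw [hexp, hexp]

private lemma scalar_eq_of_disj {p : ℝ} (hp0 : 0 < p) {a b : ℂ} (h : a = 0 ∨ b = 0) :
    ‖a + b‖ ^ p + ‖a - b‖ ^ p = 2 * (‖a‖ ^ p + ‖b‖ ^ p) := by
  rcases h with rfl | rfl
  · simp [Real.zero_rpow hp0.ne', norm_neg]
    ring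
  · simp [Real.zero_rpow hp0.ne']
    ring

private lemma scalar_le_of_lt_two {p : ℝ} (hp1 : 1 ≤ p) (hplt : p < 2) (a b : ℂ) :
    ‖a + b‖ ^ p + ‖a - b‖ ^ p ≤ 2 * (‖a‖ ^ p + ‖b‖ ^ p) := by
  by_cases ha : a = 0
  · exact (scalar_eq_of_disj (by linarith) (Or.inl ha)).le
  by_cases hb : b = 0
  · exact (scalar_eq_of_disj (by linarith) (Or.inr hb)).le
  exact (scalar_lt_of_lt_two hp1 hplt ha hb).le

private lemma scalar_ge_of_gt_two {p : ℝ} (hpgt : 2 < p) (a b : ℂ) :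
    2 * (‖a‖ ^ p + ‖b‖ ^ p) ≤ ‖a + b‖ ^ p + ‖a - b‖ ^ p := by
  by_cases ha : a = 0
  · exact (scalar_eq_of_disj (by linarith) (Or.inl ha)).ge
  by_cases hb : b = 0
  · exact (scalar_eq_of_disj (by linarith) (Or.inr hb)).ge
  exact (scalar_gt_of_gt_two hpgt ha hb).le

/-! ### `ℓ^p` lemmas -/

variable {X : Type*} {p : ℝ}

private lemma hasSum_norm' (hp1 : 1 ≤ p) (f : lp (fun _ : X => ℂ) (ENNReal.ofReal p)) :
    HasSum (fun x => ‖f x‖ ^ p) (‖f‖ ^ p) := by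
  have hp0 : 0 < p := zero_lt_one.trans_le hp1
  have h := lp.hasSum_norm (p := ENNReal.ofReal p)
    (by rw [ENNReal.toReal_ofReal hp0.le]; exact hp0) f
  rwa [ENNReal.toReal_ofReal hp0.le] at h

/-- Characterization of disjoint supports via the Clarkson–Lamperti equality, `p ≠ 2`. -/
private lemma disj_iff (hp1 : 1 ≤ p) (hp2 : p ≠ 2) [Fact (1 ≤ ENNReal.ofReal p)]
    (f g : lp (fun _ : X => ℂ) (ENNReal.ofReal p)) :
    (∀ x, f x = 0 ∨ g x = 0) ↔
      ‖f + g‖ ^ p + ‖f - g‖ ^ p = 2 * (‖f‖ ^ p + ‖g‖ ^ p) := by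
  have hp0 : 0 < p := zero_lt_one.trans_le hp1
  have hf := hasSum_norm' hp1 f
  have hg := hasSum_norm' hp1 g
  have hfg := hasSum_norm' hp1 (f + g)
  have hfg' := hasSum_norm' hp1 (f - g)
  simp only [lp.coeFn_add, lp.coeFn_sub, Pi.add_apply, Pi.sub_apply] at hfg hfg'
  have hL : HasSum (fun x => ‖f x + g x‖ ^ p + ‖f x - g x‖ ^ p)
      (‖f + g‖ ^ p + ‖f - g‖ ^ p) := hfg.add hfg'
  have hR : HasSum (fun x => 2 * (‖f x‖ ^ p + ‖g x‖ ^ p))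
      (2 * (‖f‖ ^ p + ‖g‖ ^ p)) := (hf.add hg).mul_left 2
  constructor
  · intro h
    have heq : (fun x => ‖f x + g x‖ ^ p + ‖f x - g x‖ ^ p)
        = fun x => 2 * (‖f x‖ ^ p + ‖g x‖ ^ p) := by
      funext x
      exact scalar_eq_of_disj hp0 (h x)
    rw [heq] at hL
    exact hL.unique hR
  · intro heq x
    by_contra hx
    push_neg at hx
    obtain ⟨hfx, hgx⟩ := hx
    rcases hp2.lt_or_gt with hlt | hgt
    · have : ‖f + g‖ ^ p + ‖f - g‖ ^ p < 2 * (‖f‖ ^ p + ‖g‖ ^ p) :=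
        hasSum_lt (fun y => scalar_le_of_lt_two hp1 hlt (f y) (g y))
          (scalar_lt_of_lt_two hp1 hlt hfx hgx) hL hR
      exact absurd heq this.ne
    · have : 2 * (‖f‖ ^ p + ‖g‖ ^ p) < ‖f + g‖ ^ p + ‖f - g‖ ^ p :=
        hasSum_lt (fun y => scalar_ge_of_gt_two hgt (f y) (g y))
          (scalar_gt_of_gt_two hgt hfx hgx) hR hL
      exact absurd heq this.ne'
  
/-- A surjective linear isometry preserves disjointness of supports. -/
private lemma disj_map (hp1 : 1 ≤ p) (hp2 : p ≠ 2) [Fact (1 ≤ ENNReal.ofReal p)]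
    (T : lp (fun _ : X => ℂ) (ENNReal.ofReal p) ≃ₗᵢ[ℂ] lp (fun _ : X => ℂ) (ENNReal.ofReal p))
    {f g : lp (fun _ : X => ℂ) (ENNReal.ofReal p)} (h : ∀ x, f x = 0 ∨ g x = 0) :
    ∀ y, T f y = 0 ∨ T g y = 0 := by
  apply (disj_iff hp1 hp2 (T f) (T g)).2
  rw [← map_add, ← map_sub]
  simp only [LinearIsometryEquiv.norm_map]
  exact (disj_iff hp1 hp2 f g).1 h

private lemma eval_continuous (hp1 : 1 ≤ p) [Fact (1 ≤ ENNReal.ofReal p)] (y : X) :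
    Continuous fun f : lp (fun _ : X => ℂ) (ENNReal.ofReal p) => f y := by
  have hp0 : 0 < p := zero_lt_one.trans_le hp1
  have hPne : (ENNReal.ofReal p) ≠ 0 := (ENNReal.ofReal_pos.2 hp0).ne'
  refine (LipschitzWith.of_dist_le_mul (K := 1) fun f g => ?_).continuous
  rw [NNReal.coe_one, one_mul, dist_eq_norm, dist_eq_norm]
  have h := lp.norm_apply_le_norm hPne (f - g) y
  rwa [lp.coeFn_sub, Pi.sub_apply] at h

private lemma hasSum_eval [DecidableEq X] (hp1 : 1 ≤ p) [Fact (1 ≤ ENNReal.ofReal p)]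
    (T : lp (fun _ : X => ℂ) (ENNReal.ofReal p) ≃ₗᵢ[ℂ] lp (fun _ : X => ℂ) (ENNReal.ofReal p))
    (f : lp (fun _ : X => ℂ) (ENNReal.ofReal p)) (y : X) :
    HasSum (fun x => f x * (T (lp.single (ENNReal.ofReal p) x 1)) y) (T f y) := by
  have h1 : HasSum (fun x => lp.single (ENNReal.ofReal p) x (f x)) f :=
    lp.hasSum_single ENNReal.ofReal_ne_top f
  have h2 := h1.map (T.toLinearEquiv.toLinearMap) T.continuous
  let ev : lp (fun _ : X => ℂ) (ENNReal.ofReal p) →+ ℂ :=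
    { toFun := fun h => h y
      map_zero' := by
        have : ⇑(0 : lp (fun _ : X => ℂ) (ENNReal.ofReal p)) = 0 := lp.coeFn_zero _ _
        simp [this]
      map_add' := fun a b => by
        show (a + b : lp (fun _ : X => ℂ) (ENNReal.ofReal p)) y = _
        rw [lp.coeFn_add]
        rfl }
  have h3 := h2.map ev (eval_continuous hp1 y)
  have hcoe : ∀ u : lp (fun _ : X => ℂ) (ENNReal.ofReal p),
      T.toLinearEquiv.toLinearMap u = T u := fun _ => rfl
  have h4 : HasSum (fun x => (T (lp.single (ENNReal.ofReal p) x (f x))) y) (T f y) := by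
    exact h3
  have hfun : (fun x => (T (lp.single (ENNReal.ofReal p) x (f x))) y)
      = fun x => f x * (T (lp.single (ENNReal.ofReal p) x 1)) y := by
    funext x
    have hsx : lp.single (ENNReal.ofReal p) x (f x)
        = f x • lp.single (E := fun _ : X => ℂ) (ENNReal.ofReal p) x (1 : ℂ) := by
      rw [← lp.single_smul, smul_eq_mul, mul_one]
    rw [hsx, T.map_smul, lp.coeFn_smul, Pi.smul_apply, smul_eq_mul]
  rwa [hfun] at h4

/-- Every surjective linear isometry of `ℓ^p(X)`, `p ≠ 2`, is given by a weight and
a map on coordinates. -/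
private lemma semi [DecidableEq X] (hp1 : 1 ≤ p) (hp2 : p ≠ 2) [Fact (1 ≤ ENNReal.ofReal p)]
    (T : lp (fun _ : X => ℂ) (ENNReal.ofReal p) ≃ₗᵢ[ℂ] lp (fun _ : X => ℂ) (ENNReal.ofReal p)) :
    ∃ (s : X → X) (c : X → ℂ), (∀ y, c y ≠ 0) ∧
      ∀ (f : lp (fun _ : X => ℂ) (ENNReal.ofReal p)) (y : X), T f y = c y * f (s y) := by
  set e : X → lp (fun _ : X => ℂ) (ENNReal.ofReal p) :=
    fun x => lp.single (E := fun _ : X => ℂ) (ENNReal.ofReal p) x (1 : ℂ) with he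
  have hdisj : ∀ x x' : X, x ≠ x' → ∀ y, T (e x) y = 0 ∨ T (e x') y = 0 := by
    intro x x' hne
    apply disj_map hp1 hp2 T
    intro z
    by_cases hz : z = x
    · right
      subst hz
      exact lp.single_apply_ne _ _ _ (by simpa using hne)
    · left
      exact lp.single_apply_ne _ _ _ hz
  have hex : ∀ y, ∃ x, T (e x) y ≠ 0 := by
    intro y
    by_contra hno
    push_neg at hno
    have h := hasSum_eval hp1 T (T.symm (e y)) y
    rw [T.apply_symm_apply] at h
    have hno' : ∀ x, T (lp.single (E := fun _ : X => ℂ) (ENNReal.ofReal p) x 1) y = 0 := hno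
    simp only [hno', mul_zero] at h
    have h0 : e y y = 0 := h.unique hasSum_zero
    rw [lp.single_apply_self] at h0
    exact one_ne_zero h0
  choose s hs using hex
  refine ⟨s, fun y => T (e (s y)) y, fun y => hs y, ?_⟩
  intro f y
  have h := hasSum_eval hp1 T f y
  have hvan : ∀ x, x ≠ s y → f x * T (e x) y = 0 := by
    intro x hx
    rcases hdisj x (s y) hx y with h0 | h0
    · rw [h0, mul_zero]
    · exact absurd h0 (hs y)
  have := (hasSum_single (s y) hvan).unique h
  rw [← this, mul_comm]

/-- Every surjective linear isometry of `ℓ^p(X)`, `p ≠ 2`, is a twisted permutation. -/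
private lemma full [DecidableEq X] (hp1 : 1 ≤ p) (hp2 : p ≠ 2) [Fact (1 ≤ ENNReal.ofReal p)]
    (T : lp (fun _ : X => ℂ) (ENNReal.ofReal p) ≃ₗᵢ[ℂ] lp (fun _ : X => ℂ) (ENNReal.ofReal p)) :
    ∃ (σ : Equiv.Perm X) (c : X → ℂ), (∀ y, ‖c y‖ = 1) ∧
      ∀ (f : lp (fun _ : X => ℂ) (ENNReal.ofReal p)) (y : X), T f y = c y * f (σ y) := by
  have hp0 : 0 < p := zero_lt_one.trans_le hp1
  set e : X → lp (fun _ : X => ℂ) (ENNReal.ofReal p) :=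
    fun x => lp.single (E := fun _ : X => ℂ) (ENNReal.ofReal p) x (1 : ℂ) with he
  obtain ⟨s, c, hc, hF⟩ := semi hp1 hp2 T
  obtain ⟨t, d, hd, hG⟩ := semi hp1 hp2 T.symm
  have hcval : ∀ y, T (e (s y)) y = c y := by
    intro y
    rw [hF (e (s y)) y, lp.single_apply_self, mul_one]
  have hts : ∀ y, t (s y) = y := by
    intro y
    by_contra hne
    have h1 := hF (T.symm (e y)) y
    rw [T.apply_symm_apply, hG (e y) (s y)] at h1
    rw [lp.single_apply_self] at h1
    rw [lp.single_apply_ne _ _ _ hne] at h1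
    simp at h1
  have hst : ∀ x, s (t x) = x := by
    intro x
    by_contra hne
    have h1 := hG (T (e x)) x
    rw [T.symm_apply_apply, hF (e x) (t x)] at h1
    rw [lp.single_apply_self] at h1
    rw [lp.single_apply_ne _ _ _ hne] at h1
    simp at h1
  have hsinj : Function.Injective s := Function.LeftInverse.injective hts
  refine ⟨⟨s, t, hts, hst⟩, c, ?_, ?_⟩
  · intro y
    have hn : ‖T (e (s y))‖ = 1 := by
      rw [T.norm_map]
      have := lp.norm_single (E := fun _ : X => ℂ)
        (ENNReal.ofReal_pos.2 hp0) (s y) (1 : ℂ)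
      simpa using this
    have h2 : HasSum (fun y' => ‖T (e (s y)) y'‖ ^ p) 1 := by
      have := hasSum_norm' hp1 (T (e (s y)))
      rwa [hn, Real.one_rpow] at this
    have hvan : ∀ y', y' ≠ y → ‖T (e (s y)) y'‖ ^ p = 0 := by
      intro y' hy'
      rw [hF (e (s y)) y', lp.single_apply_ne _ _ _ (fun h => hy' (hsinj h)), mul_zero,
        norm_zero, Real.zero_rpow hp0.ne']
    have h3 := (hasSum_single y hvan).unique h2
    have h4 : ‖c y‖ ^ p = 1 ^ p := by rw [← hcval, h3, Real.one_rpow]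
    exact Real.rpow_left_injOn hp0.ne' (Set.mem_setOf.2 (norm_nonneg _))
      (Set.mem_setOf.2 zero_le_one) h4
  · intro f y
    simpa using hF f y

end OrthRepAux

/-- Every strongly continuous representation of a topological group
`G` by surjective linear isometries of `ℓ_p(X)`, `p ≠ 2`, comes from a continuous action
of `G` on `X` and a continuous `S¹`-valued cocycle via
`(π(g) f)(x) = c(g⁻¹, x) f(g⁻¹ x)`. -/
theorem orthRep_eq_twisted_permutation
    (G : Type*) [Group G] [TopologicalSpace G] [IsTopologicalGroup G]
    (X : Type*) [Countable X]
    (p : ℝ) (hp1 : 1 ≤ p) (hp2 : p ≠ 2) [Fact (1 ≤ ENNReal.ofReal p)]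
    (π : G →* (lp (fun _ : X => ℂ) (ENNReal.ofReal p) ≃ₗᵢ[ℂ]
      lp (fun _ : X => ℂ) (ENNReal.ofReal p)))
    (hcont : ∀ f : lp (fun _ : X => ℂ) (ENNReal.ofReal p), Continuous fun g => π g f) :
    ∃ (φ : G →* Equiv.Perm X) (c : G → X → ℂ),
      (∀ (g : G) (x : X), ‖c g x‖ = 1) ∧
      (∀ (g : G) (f : lp (fun _ : X => ℂ) (ENNReal.ofReal p)) (x : X),
        (π g f) x = c g⁻¹ x * f (φ g⁻¹ x)) ∧
      (∀ x : X, IsOpen {g : G | φ g x = x}) ∧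
      (∀ x : X, Continuous fun g => c g x) ∧
      (∀ (g₁ g₂ : G) (x : X), c (g₁ * g₂) x = c g₁ (φ g₂ x) * c g₂ x) := by
  classical
  have hp0 : 0 < p := zero_lt_one.trans_le hp1
  set e : X → lp (fun _ : X => ℂ) (ENNReal.ofReal p) :=
    fun x => lp.single (E := fun _ : X => ℂ) (ENNReal.ofReal p) x (1 : ℂ) with he
  choose σ c₀ hnorm hform using fun g : G => OrthRepAux.full hp1 hp2 (π g)
  have hc₀ne : ∀ (g : G) (y : X), c₀ g y ≠ 0 := by
    intro g y h
    have := hnorm g y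
    rw [h, norm_zero] at this
    exact zero_ne_one this
  have uniq : ∀ (g : G) (s : X → X) (d : X → ℂ),
      (∀ (f : lp (fun _ : X => ℂ) (ENNReal.ofReal p)) (y : X), π g f y = d y * f (s y)) →
      ∀ y, σ g y = s y ∧ c₀ g y = d y := by
    intro g s d hrep y
    have h1 := hform g (e (σ g y)) y
    rw [lp.single_apply_self, mul_one] at h1
    have h2 := hrep (e (σ g y)) y
    by_cases hss : s y = σ g y
    · rw [hss, lp.single_apply_self, mul_one] at h2
      exact ⟨hss.symm, h1.symm.trans h2⟩
    · exfalso
      rw [lp.single_apply_ne _ _ _ hss, mul_zero] at h2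
      exact hc₀ne g y (by rw [← h1, h2])
  have comp : ∀ a b : G, ∀ y,
      σ (a * b) y = σ b (σ a y) ∧ c₀ (a * b) y = c₀ a y * c₀ b (σ a y) := by
    intro a b
    apply uniq (a * b) (fun y => σ b (σ a y)) (fun y => c₀ a y * c₀ b (σ a y))
    intro f y
    have hm : π (a * b) f = π a (π b f) := by rw [map_mul]; rfl
    rw [hm, hform a (π b f) y, hform b f (σ a y), mul_assoc]
  have idrep : ∀ y, σ 1 y = y ∧ c₀ 1 y = 1 := by
    apply uniq 1 id (fun _ => 1)
    intro f y
    rw [map_one, one_mul]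
    rfl
  have hinvl : ∀ (g : G) (y : X), σ g⁻¹ (σ g y) = y := by
    intro g y
    have h := (comp g g⁻¹ y).1
    rw [mul_inv_cancel, (idrep y).1] at h
    exact h.symm
  have hinvr : ∀ (g : G) (y : X), σ g (σ g⁻¹ y) = y := by
    intro g y
    have h := (comp g⁻¹ g y).1
    rw [inv_mul_cancel, (idrep y).1] at h
    exact h.symm
  have hsupp : ∀ (g : G) (x y : X), y ≠ σ g⁻¹ x → π g (e x) y = 0 := by
    intro g x y hy
    rw [hform g (e x) y]
    have hne : σ g y ≠ x := by
      intro h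
      exact hy (by rw [← h, hinvl g y])
    rw [lp.single_apply_ne _ _ _ hne, mul_zero]
  have hval : ∀ (g : G) (x : X), ‖π g (e x) (σ g⁻¹ x)‖ = 1 := by
    intro g x
    rw [hform g (e x) (σ g⁻¹ x), hinvr g x, lp.single_apply_self, mul_one]
    exact hnorm g _
  have hloc : ∀ x x₀ : X, IsOpen {g : G | σ g⁻¹ x = x₀} := by
    intro x x₀
    rw [isOpen_iff_mem_nhds]
    intro g₀ hg₀
    have hU : IsOpen {g : G | ‖π g (e x) - π g₀ (e x)‖ < 1} :=
      isOpen_lt ((hcont (e x)).sub continuous_const).norm continuous_const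
    refine Filter.mem_of_superset (hU.mem_nhds ?_) ?_
    · show ‖π g₀ (e x) - π g₀ (e x)‖ < 1
      rw [sub_self, norm_zero]
      exact zero_lt_one
    · intro g hg
      show σ g⁻¹ x = x₀
      rw [← hg₀]
      by_contra hne
      have h1 : π g (e x) (σ g₀⁻¹ x) = 0 := hsupp g x _ (fun h => hne h.symm)
      have h2 : ‖π g₀ (e x) (σ g₀⁻¹ x)‖ = 1 := hval g₀ x
      have h3 : ‖(π g (e x) - π g₀ (e x)) (σ g₀⁻¹ x)‖ = 1 := by
        rw [lp.coeFn_sub, Pi.sub_apply, h1, zero_sub, norm_neg, h2]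
      have h4 := lp.norm_apply_le_norm (ENNReal.ofReal_pos.2 hp0).ne'
        (π g (e x) - π g₀ (e x)) (σ g₀⁻¹ x)
      rw [h3] at h4
      have h5 : ‖π g (e x) - π g₀ (e x)‖ < 1 := hg
      linarith
  refine ⟨MonoidHom.mk' (fun g => σ g⁻¹) ?_, fun g x => c₀ g⁻¹ x, ?_, ?_, ?_, ?_, ?_⟩
  · intro a b
    ext y
    have h := (comp b⁻¹ a⁻¹ y).1
    rw [← mul_inv_rev] at h
    exact h
  · intro g x
    exact hnorm g⁻¹ x
  · intro g f x
    have h := hform g f x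
    show (π g f) x = c₀ g⁻¹⁻¹ x * f (σ g⁻¹⁻¹ x)
    rw [inv_inv]
    exact h
  · intro x
    show IsOpen {g : G | σ g⁻¹ x = x}
    exact hloc x x
  · intro x
    rw [continuous_iff_continuousAt]
    intro g₀
    have hW : IsOpen {g : G | σ g⁻¹ x = σ g₀⁻¹ x} := hloc x (σ g₀⁻¹ x)
    have hFcont : Continuous fun g : G => (π g⁻¹ (e (σ g₀⁻¹ x))) x :=
      (OrthRepAux.eval_continuous hp1 x).comp ((hcont (e (σ g₀⁻¹ x))).comp continuous_inv)
    have hev : (fun g : G => π g⁻¹ (e (σ g₀⁻¹ x)) x) =ᶠ[nhds g₀] (fun g : G => c₀ g⁻¹ x) := by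
      filter_upwards [hW.mem_nhds (show σ g₀⁻¹ x = σ g₀⁻¹ x from rfl)] with g hg
      rw [hform g⁻¹ (e (σ g₀⁻¹ x)) x, ← hg, lp.single_apply_self, mul_one]
    exact hFcont.continuousAt.congr hev
  · intro g₁ g₂ x
    have h := (comp g₂⁻¹ g₁⁻¹ x).2
    rw [← mul_inv_rev] at h
    show c₀ (g₁ * g₂)⁻¹ x = c₀ g₁⁻¹ (σ g₂⁻¹ x) * c₀ g₂⁻¹ x
    rw [h, mul_comm]

end
end
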